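/- arXiv:2401.14160 — 10 statements merged into one kernel-verified Lean document; each statement's English description precedes it below -/
import Mathlib

section
/- For any joint probability mass function p on the product of finite sets U and V and any partition {U_s : s ∈ S} of U, the semantic conditional entropy is no more than the Shannon conditional entropy: H_s(Ũ|V) = −Σ_{v} Σ_{s∈S} p(U_s, v) log₂ (p(U_s, v)/p(v)) ≤ −Σ_{u,v} p(u,v) log₂ (p(u,v)/p(v)) = H(U|V), where p(U_s, v) = Σ_{u∈U_s} p(u,v), p(v) = Σ_u p(u,v), and terms with p(v) = 0 are omitted. -/
open Finset
open scoped Classical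

/-- Probability of a class of the partition induced by a class-index map `c`:
`P(U_s) = Σ_{u ∈ U_s} p u`. -/
noncomputable def Pclass {U S : Type*} [Fintype U] (p : U → ℝ) (c : U → S) (s : S) : ℝ :=
  ∑ u : U, if c u = s then p u else 0

/-- Semantic entropy `H_s(Ũ) = −Σ_s P(U_s) log₂ P(U_s)`. -/
noncomputable def semEntropy {U S : Type*} [Fintype U] [Fintype S]
    (p : U → ℝ) (c : U → S) : ℝ :=
  -∑ s : S, Pclass p c s * Real.logb 2 (Pclass p c s)

/-- Shannon entropy `H(U) = −Σ_u p(u) log₂ p(u)`. -/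
noncomputable def shEntropy {U : Type*} [Fintype U] (p : U → ℝ) : ℝ :=
  -∑ u : U, p u * Real.logb 2 (p u)

/-- Probability of a product class `P(U_s × V_t) = Σ_{u∈U_s} Σ_{v∈V_t} p(u,v)`. -/
noncomputable def PjointClass {U V S T : Type*} [Fintype U] [Fintype V]
    (p : U → V → ℝ) (cU : U → S) (cV : V → T) (s : S) (t : T) : ℝ :=
  ∑ u : U, ∑ v : V, if cU u = s ∧ cV v = t then p u v else 0

/-- Semantic joint entropy `H_s(Ũ,Ṽ) = −Σ_{s,t} P(U_s × V_t) log₂ P(U_s × V_t)`. -/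
noncomputable def semJointEntropy {U V S T : Type*} [Fintype U] [Fintype V] [Fintype S] [Fintype T]
    (p : U → V → ℝ) (cU : U → S) (cV : V → T) : ℝ :=
  -∑ s : S, ∑ t : T, PjointClass p cU cV s t * Real.logb 2 (PjointClass p cU cV s t)

/-- Shannon joint entropy `H(U,V) = −Σ_{u,v} p(u,v) log₂ p(u,v)`. -/
noncomputable def shJointEntropy {U V : Type*} [Fintype U] [Fintype V] (p : U → V → ℝ) : ℝ :=
  -∑ u : U, ∑ v : V, p u v * Real.logb 2 (p u v)

/-- Marginal `p(u) = Σ_v p(u,v)`. -/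
noncomputable def margU {U V : Type*} [Fintype V] (p : U → V → ℝ) (u : U) : ℝ :=
  ∑ v : V, p u v

/-- Marginal `p(v) = Σ_u p(u,v)`. -/
noncomputable def margV {U V : Type*} [Fintype U] (p : U → V → ℝ) (v : V) : ℝ :=
  ∑ u : U, p u v

/-- `p(U_s, v) = Σ_{u ∈ U_s} p(u,v)`. -/
noncomputable def PclassU {U V S : Type*} [Fintype U]
    (p : U → V → ℝ) (cU : U → S) (s : S) (v : V) : ℝ :=
  ∑ u : U, if cU u = s then p u v else 0

/-- `p(u, V_t) = Σ_{v ∈ V_t} p(u,v)`. -/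
noncomputable def PclassV {U V T : Type*} [Fintype V]
    (p : U → V → ℝ) (cV : V → T) (u : U) (t : T) : ℝ :=
  ∑ v : V, if cV v = t then p u v else 0

/-- Semantic conditional entropy
`H_s(Ũ|V) = −Σ_v Σ_s p(U_s, v) log₂ (p(U_s, v)/p(v))` (terms with `p(v) = 0` vanish). -/
noncomputable def semCondEntropyU {U V S : Type*} [Fintype U] [Fintype V] [Fintype S]
    (p : U → V → ℝ) (cU : U → S) : ℝ :=
  -∑ v : V, ∑ s : S, PclassU p cU s v * Real.logb 2 (PclassU p cU s v / margV p v)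

/-- Semantic conditional entropy
`H_s(Ṽ|U) = −Σ_u Σ_t p(u, V_t) log₂ (p(u, V_t)/p(u))` (terms with `p(u) = 0` vanish). -/
noncomputable def semCondEntropyV {U V T : Type*} [Fintype U] [Fintype V] [Fintype T]
    (p : U → V → ℝ) (cV : V → T) : ℝ :=
  -∑ u : U, ∑ t : T, PclassV p cV u t * Real.logb 2 (PclassV p cV u t / margU p u)

/-- Shannon conditional entropy `H(U|V) = −Σ_{u,v} p(u,v) log₂ (p(u,v)/p(v))`
(terms with `p(v) = 0` vanish). -/
noncomputable def shCondEntropyU {U V : Type*} [Fintype U] [Fintype V] (p : U → V → ℝ) : ℝ :=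
  -∑ u : U, ∑ v : V, p u v * Real.logb 2 (p u v / margV p v)

/-- Mutual information `I(U;V) = H(U) + H(V) − H(U,V)`. -/
noncomputable def mutualInfo {U V : Type*} [Fintype U] [Fintype V] (p : U → V → ℝ) : ℝ :=
  shEntropy (margU p) + shEntropy (margV p) - shJointEntropy p

/-- Down semantic mutual information `I_s(Ũ;Ṽ) = H_s(Ũ) + H_s(Ṽ) − H(U,V)`. -/
noncomputable def downSMI {U V S T : Type*} [Fintype U] [Fintype V] [Fintype S] [Fintype T]
    (p : U → V → ℝ) (cU : U → S) (cV : V → T) : ℝ :=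
  semEntropy (margU p) cU + semEntropy (margV p) cV - shJointEntropy p

/-- Up semantic mutual information `I^s(Ũ;Ṽ) = H(U) + H(V) − H_s(Ũ,Ṽ)`. -/
noncomputable def upSMI {U V S T : Type*} [Fintype U] [Fintype V] [Fintype S] [Fintype T]
    (p : U → V → ℝ) (cU : U → S) (cV : V → T) : ℝ :=
  shEntropy (margU p) + shEntropy (margV p) - semJointEntropy p cU cV

lemma aux_group_xlogx {U S : Type*} [Fintype U] [Fintype S]
    (f : U → ℝ) (hf : ∀ u, 0 ≤ f u) (c : U → S) :
    ∑ u : U, f u * Real.logb 2 (f u) ≤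
      ∑ s : S, (∑ u : U, if c u = s then f u else 0) *
        Real.logb 2 (∑ u : U, if c u = s then f u else 0) := by
  set Q : S → ℝ := fun s => ∑ u : U, if c u = s then f u else 0 with hQ
  have hle : ∀ u, f u ≤ Q (c u) := by
    intro u
    have := Finset.single_le_sum
      (f := fun u' : U => if c u' = c u then f u' else 0)
      (fun i _ => by by_cases h : c i = c u <;> simp [h, hf i]) (Finset.mem_univ u)
    simpa using this
  have hrhs : ∑ s : S, Q s * Real.logb 2 (Q s)
      = ∑ u : U, f u * Real.logb 2 (Q (c u)) := by
    have : ∀ s, Q s * Real.logb 2 (Q s)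
        = ∑ u : U, (if c u = s then f u * Real.logb 2 (Q s) else 0) := by
      intro s
      rw [hQ]
      rw [Finset.sum_mul]
      exact Finset.sum_congr rfl fun u _ => by split <;> simp
    rw [Finset.sum_congr rfl fun s _ => this s, Finset.sum_comm]
    exact Finset.sum_congr rfl fun u _ => by simp
  rw [hrhs]
  apply Finset.sum_le_sum
  intro u _
  rcases (hf u).eq_or_lt with h | h
  · simp [← h]
  · exact mul_le_mul_of_nonneg_left
      (Real.logb_le_logb_of_le one_lt_two h (hle u)) (hf u)

/-- For any joint pmf `p` on `U × V` and any partition of `U`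
(encoded by a surjective class-index map `cU`), the semantic conditional entropy is at most
the Shannon conditional entropy: `H_s(Ũ|V) ≤ H(U|V)`. -/
theorem semantic_conditional_entropy_le_shannon_conditional_entropy
    {U V S : Type*} [Fintype U] [Fintype V] [Fintype S]
    (p : U → V → ℝ) (hp0 : ∀ u v, 0 ≤ p u v) (hp1 : ∑ u : U, ∑ v : V, p u v = 1)
    (cU : U → S) (hcU : Function.Surjective cU) :
    semCondEntropyU p cU ≤ shCondEntropyU p := by
  unfold semCondEntropyU shCondEntropyU
  rw [show (∑ u : U, ∑ v : V, p u v * Real.logb 2 (p u v / margV p v))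
      = ∑ v : V, ∑ u : U, p u v * Real.logb 2 (p u v / margV p v) from Finset.sum_comm]
  apply neg_le_neg
  apply Finset.sum_le_sum
  intro v _
  by_cases hv : margV p v = 0
  · have hz : ∀ u, p u v = 0 := by
      intro u
      have := (Finset.sum_eq_zero_iff_of_nonneg (fun u _ => hp0 u v)).mp hv
      exact this u (Finset.mem_univ u)
    have hPc : ∀ s, PclassU p cU s v = 0 := by
      intro s
      unfold PclassU
      exact Finset.sum_eq_zero fun u _ => by simp [hz u]
    simp [hz, hPc]
  · have hvpos : 0 < margV p v :=
      lt_of_le_of_ne (Finset.sum_nonneg fun u _ => hp0 u v) (Ne.symm hv)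
    have hpt : ∀ x : ℝ, 0 ≤ x →
        x * Real.logb 2 (x / margV p v)
          = x * Real.logb 2 x - x * Real.logb 2 (margV p v) := by
      intro x hx
      rcases hx.eq_or_lt with h | h
      · simp [← h]
      · rw [Real.logb_div h.ne' hv]; ring
    have hPcnn : ∀ s, 0 ≤ PclassU p cU s v := by
      intro s
      exact Finset.sum_nonneg fun u _ => by split <;> [exact hp0 u v; exact le_rfl]
    have hsum : ∑ s : S, PclassU p cU s v = margV p v := by
      unfold PclassU margV
      rw [Finset.sum_comm]
      exact Finset.sum_congr rfl fun u _ => by simp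
    have key := aux_group_xlogx (fun u => p u v) (fun u => hp0 u v) cU
    have hL : ∑ s : S, PclassU p cU s v * Real.logb 2 (PclassU p cU s v / margV p v)
        = (∑ s : S, PclassU p cU s v * Real.logb 2 (PclassU p cU s v))
          - margV p v * Real.logb 2 (margV p v) := by
      rw [Finset.sum_congr rfl fun s _ => hpt _ (hPcnn s), Finset.sum_sub_distrib,
        ← Finset.sum_mul, hsum]
    have hR : ∑ u : U, p u v * Real.logb 2 (p u v / margV p v)
        = (∑ u : U, p u v * Real.logb 2 (p u v))
          - margV p v * Real.logb 2 (margV p v) := by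
      rw [Finset.sum_congr rfl fun u _ => hpt _ (hp0 u v), Finset.sum_sub_distrib,
        ← Finset.sum_mul]
      rfl
    rw [hL, hR]
    have : ∑ s : S, PclassU p cU s v * Real.logb 2 (PclassU p cU s v)
        = ∑ s : S, (∑ u : U, if cU u = s then p u v else 0) *
          Real.logb 2 (∑ u : U, if cU u = s then p u v else 0) := rfl
    linarith [key, this ▸ key]
end

section
/- (Chain rule of semantic entropy) For any joint probability mass function p on the product of finite sets U and V and any partitions {U_s : s ∈ S} of U and {V_t : t ∈ T} of V, the following chain of inequalities holds: H_s(Ũ) + H_s(Ṽ|U) ≤ H_s(Ũ,Ṽ) ≤ H(U) + H_s(Ṽ|U) ≤ H(U,V). -/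
open Finset
open scoped Classical

private lemma logb_mono2 {x y : ℝ} (hx : 0 < x) (hxy : x ≤ y) :
    Real.logb 2 x ≤ Real.logb 2 y :=
  (Real.logb_le_logb (by norm_num) hx (lt_of_lt_of_le hx hxy)).mpr hxy

private lemma sum_mul_logb_le {ι : Type*} (s : Finset ι) (a : ι → ℝ)
    (ha : ∀ i ∈ s, 0 ≤ a i) :
    ∑ i ∈ s, a i * Real.logb 2 (a i) ≤ (∑ i ∈ s, a i) * Real.logb 2 (∑ i ∈ s, a i) := by
  have h1 : ∑ i ∈ s, a i * Real.logb 2 (a i) ≤ ∑ i ∈ s, a i * Real.logb 2 (∑ j ∈ s, a j) := by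
    refine Finset.sum_le_sum fun i hi => ?_
    rcases eq_or_lt_of_le (ha i hi) with h | h
    · rw [← h]; simp
    · exact mul_le_mul_of_nonneg_left (logb_mono2 h (Finset.single_le_sum ha hi)) h.le
  simpa [← Finset.sum_mul] using h1

private lemma sub_le_mul_log_div {x y : ℝ} (hx : 0 ≤ x) (hy : 0 < y) :
    x - y ≤ x * Real.log (x / y) := by
  rcases eq_or_lt_of_le hx with h | h
  · rw [← h]; simp; linarith
  · have hxy : 0 < y / x := div_pos hy h
    have h1 := Real.log_le_sub_one_of_pos hxy
    have hlog : Real.log (x / y) = - Real.log (y / x) := by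
      rw [← Real.log_inv]; congr 1; rw [inv_div]
    rw [hlog]
    have h2 : x * Real.log (y / x) ≤ x * (y / x - 1) := mul_le_mul_of_nonneg_left h1 h.le
    have h3 : x * (y / x - 1) = y - x := by field_simp
    linarith

private lemma log_sum_div {ι : Type*} (s : Finset ι) (a b : ι → ℝ)
    (ha : ∀ i ∈ s, 0 ≤ a i) (hb : ∀ i ∈ s, 0 ≤ b i)
    (hab : ∀ i ∈ s, b i = 0 → a i = 0) :
    (∑ i ∈ s, a i) * Real.log ((∑ i ∈ s, a i) / (∑ i ∈ s, b i)) ≤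
      ∑ i ∈ s, a i * Real.log (a i / b i) := by
  set A := ∑ i ∈ s, a i with hA
  set B := ∑ i ∈ s, b i with hB
  have hA0 : 0 ≤ A := Finset.sum_nonneg ha
  rcases eq_or_lt_of_le (Finset.sum_nonneg hb : (0:ℝ) ≤ B) with hB0 | hB0
  · have hb0 := (Finset.sum_eq_zero_iff_of_nonneg hb).mp hB0.symm
    have ha0 : ∀ i ∈ s, a i = 0 := fun i hi => hab i hi (hb0 i hi)
    have hA' : A = 0 := Finset.sum_eq_zero ha0
    rw [hA', Finset.sum_eq_zero (fun i hi => by rw [ha0 i hi]; simp)]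
    simp
  · have key : ∀ i ∈ s, a i - b i * (A / B) ≤
        a i * Real.log (a i / b i) - a i * Real.log (A / B) := by
      intro i hi
      rcases eq_or_lt_of_le (ha i hi) with h | h
      · have hby : 0 ≤ b i * (A / B) := mul_nonneg (hb i hi) (div_nonneg hA0 hB0.le)
        rw [← h]; simp
        linarith
      · have hbi : 0 < b i := lt_of_le_of_ne (hb i hi) fun e => by
          have := hab i hi e.symm; linarith
        have hApos : 0 < A := lt_of_lt_of_le h (Finset.single_le_sum ha hi)
        have hy : 0 < b i * (A / B) := by positivity
        have h1 := sub_le_mul_log_div h.le hy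
        have h2 : Real.log (a i / (b i * (A / B))) =
            Real.log (a i / b i) - Real.log (A / B) := by
          rw [Real.log_div (ne_of_gt h) (ne_of_gt hy),
              Real.log_mul (ne_of_gt hbi) (ne_of_gt (div_pos hApos hB0)),
              Real.log_div (ne_of_gt h) (ne_of_gt hbi),
              Real.log_div (ne_of_gt hApos) (ne_of_gt hB0)]
          ring
        rw [h2] at h1
        nlinarith [h1]
    have hsum := Finset.sum_le_sum key
    rw [Finset.sum_sub_distrib, Finset.sum_sub_distrib, ← Finset.sum_mul, ← Finset.sum_mul] at hsum
    have hBA : B * (A / B) = A := by have hBne : B ≠ 0 := ne_of_gt hB0; field_simp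
    rw [← hA, ← hB, hBA] at hsum
    linarith

private lemma logsum_logb {ι : Type*} (s : Finset ι) (a b : ι → ℝ)
    (ha : ∀ i ∈ s, 0 ≤ a i) (hb : ∀ i ∈ s, 0 ≤ b i)
    (hab : ∀ i ∈ s, b i = 0 → a i = 0) :
    (∑ i ∈ s, a i) * Real.logb 2 ((∑ i ∈ s, a i) / (∑ i ∈ s, b i)) ≤
      ∑ i ∈ s, a i * Real.logb 2 (a i / b i) := by
  have h := log_sum_div s a b ha hb hab
  have hl2 : (0:ℝ) < Real.log 2 := Real.log_pos (by norm_num)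
  simp only [Real.logb]
  calc (∑ i ∈ s, a i) * (Real.log ((∑ i ∈ s, a i) / (∑ i ∈ s, b i)) / Real.log 2)
      = ((∑ i ∈ s, a i) * Real.log ((∑ i ∈ s, a i) / (∑ i ∈ s, b i))) / Real.log 2 := by ring
    _ ≤ (∑ i ∈ s, a i * Real.log (a i / b i)) / Real.log 2 := by
        gcongr
    _ = ∑ i ∈ s, a i * (Real.log (a i / b i) / Real.log 2) := by
        rw [Finset.sum_div]; exact Finset.sum_congr rfl fun i _ => by ring

private lemma split_logb {ι : Type*} (s : Finset ι) (r : ι → ℝ) (hr : ∀ i ∈ s, 0 ≤ r i) :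
    (∑ i ∈ s, r i) * Real.logb 2 (∑ i ∈ s, r i)
      + ∑ i ∈ s, r i * Real.logb 2 (r i / (∑ i ∈ s, r i))
      = ∑ i ∈ s, r i * Real.logb 2 (r i) := by
  set R := ∑ i ∈ s, r i with hR
  rcases eq_or_lt_of_le (Finset.sum_nonneg hr : (0:ℝ) ≤ R) with h0 | h0
  · have hz := (Finset.sum_eq_zero_iff_of_nonneg hr).mp h0.symm
    have hRz : R = 0 := by rw [hR, ← h0]
    rw [hRz, Finset.sum_eq_zero (fun i hi => by rw [hz i hi]; simp),
        Finset.sum_eq_zero (fun i hi => by rw [hz i hi]; simp)]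
    simp
  · have key : ∀ i ∈ s, r i * Real.logb 2 (r i / R) =
        r i * Real.logb 2 (r i) - r i * Real.logb 2 R := by
      intro i hi
      rcases eq_or_lt_of_le (hr i hi) with h | h
      · rw [← h]; simp
      · rw [Real.logb_div (ne_of_gt h) (ne_of_gt h0)]; ring
    rw [Finset.sum_congr rfl key, Finset.sum_sub_distrib, ← Finset.sum_mul, ← hR]
    ring

private lemma fiber_sum {U S : Type*} [Fintype U] [Fintype S] [DecidableEq S]
    (c : U → S) (f : U → ℝ) :
    ∑ u : U, f u = ∑ s : S, ∑ u ∈ Finset.univ.filter (fun u => c u = s), f u :=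
  (Finset.sum_fiberwise Finset.univ c f).symm

/-- Chain rule of semantic entropy: For any joint pmf `p` on `U × V` and any
partitions of `U` and `V` (encoded by surjective class-index maps `cU`, `cV`),
`H_s(Ũ) + H_s(Ṽ|U) ≤ H_s(Ũ,Ṽ) ≤ H(U) + H_s(Ṽ|U) ≤ H(U,V)`. -/
theorem semantic_entropy_chain_rule
    {U V S T : Type*} [Fintype U] [Fintype V] [Fintype S] [Fintype T]
    (p : U → V → ℝ) (hp0 : ∀ u v, 0 ≤ p u v) (hp1 : ∑ u : U, ∑ v : V, p u v = 1)
    (cU : U → S) (hcU : Function.Surjective cU)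
    (cV : V → T) (hcV : Function.Surjective cV) :
    semEntropy (margU p) cU + semCondEntropyV p cV ≤ semJointEntropy p cU cV ∧
    semJointEntropy p cU cV ≤ shEntropy (margU p) + semCondEntropyV p cV ∧
    shEntropy (margU p) + semCondEntropyV p cV ≤ shJointEntropy p := by
  classical
  -- basic positivity facts
  have hm0 : ∀ u, 0 ≤ margU p u := fun u => Finset.sum_nonneg fun v _ => hp0 u v
  have hq0 : ∀ u t, 0 ≤ PclassV p cV u t := by
    intro u t
    refine Finset.sum_nonneg fun v _ => ?_
    split_ifs with h
    · exact hp0 u v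
    · exact le_rfl
  have hqsum : ∀ u, ∑ t : T, PclassV p cV u t = margU p u := by
    intro u
    unfold PclassV margU
    rw [Finset.sum_comm]
    refine Finset.sum_congr rfl fun v _ => ?_
    simp [Finset.sum_ite_eq]
  have hqm : ∀ u t, margU p u = 0 → PclassV p cV u t = 0 := by
    intro u t h
    have h1 := hqsum u
    rw [h] at h1
    exact (Finset.sum_eq_zero_iff_of_nonneg (fun t _ => hq0 u t)).mp h1 t (Finset.mem_univ t)
  have hR : ∀ s t, PjointClass p cU cV s t = ∑ u : U, if cU u = s then PclassV p cV u t else 0 := by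
    intro s t
    unfold PjointClass PclassV
    refine Finset.sum_congr rfl fun u _ => ?_
    split_ifs with h
    · exact Finset.sum_congr rfl fun v _ => by simp [h]
    · exact Finset.sum_eq_zero fun v _ => by simp [h]
  have hRsum : ∀ s, ∑ t : T, PjointClass p cU cV s t = Pclass (margU p) cU s := by
    intro s
    rw [Finset.sum_congr rfl (fun t _ => hR s t), Finset.sum_comm]
    unfold Pclass
    refine Finset.sum_congr rfl fun u _ => ?_
    by_cases h : cU u = s
    · simp only [h, if_true]
      exact hqsum u
    · simp [h]
  have hR0 : ∀ s t, 0 ≤ PjointClass p cU cV s t := by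
    intro s t
    rw [hR s t]
    refine Finset.sum_nonneg fun u _ => ?_
    split_ifs
    · exact hq0 u t
    · exact le_rfl
  -- Step A : H(U) + H_s(V~|U) = - Σ_{u,t} q logb q
  have hA : shEntropy (margU p) + semCondEntropyV p cV =
      -∑ u : U, ∑ t : T, PclassV p cV u t * Real.logb 2 (PclassV p cV u t) := by
    unfold shEntropy semCondEntropyV
    have h1 : ∀ u : U,
        margU p u * Real.logb 2 (margU p u)
          + ∑ t : T, PclassV p cV u t * Real.logb 2 (PclassV p cV u t / margU p u)
        = ∑ t : T, PclassV p cV u t * Real.logb 2 (PclassV p cV u t) := by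
      intro u
      have h := split_logb Finset.univ (fun t => PclassV p cV u t) (fun t _ => hq0 u t)
      rw [hqsum u] at h
      exact h
    have h2 : (∑ u : U, margU p u * Real.logb 2 (margU p u))
        + ∑ u : U, ∑ t : T, PclassV p cV u t * Real.logb 2 (PclassV p cV u t / margU p u)
        = ∑ u : U, ∑ t : T, PclassV p cV u t * Real.logb 2 (PclassV p cV u t) := by
      rw [← Finset.sum_add_distrib]
      exact Finset.sum_congr rfl fun u _ => h1 u
    linarith
  -- Step B : H_s(U~,V~) = H_s(U~) - Σ_{s,t} R logb (R / P_s)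
  have hB : semJointEntropy p cU cV = semEntropy (margU p) cU
      - ∑ s : S, ∑ t : T, PjointClass p cU cV s t *
          Real.logb 2 (PjointClass p cU cV s t / Pclass (margU p) cU s) := by
    unfold semJointEntropy semEntropy
    have h1 : ∀ s : S,
        Pclass (margU p) cU s * Real.logb 2 (Pclass (margU p) cU s)
          + ∑ t : T, PjointClass p cU cV s t *
              Real.logb 2 (PjointClass p cU cV s t / Pclass (margU p) cU s)
        = ∑ t : T, PjointClass p cU cV s t * Real.logb 2 (PjointClass p cU cV s t) := by
      intro s
      have h := split_logb Finset.univ (fun t => PjointClass p cU cV s t) (fun t _ => hR0 s t)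
      rw [hRsum s] at h
      exact h
    have h2 : (∑ s : S, Pclass (margU p) cU s * Real.logb 2 (Pclass (margU p) cU s))
        + ∑ s : S, ∑ t : T, PjointClass p cU cV s t *
            Real.logb 2 (PjointClass p cU cV s t / Pclass (margU p) cU s)
        = ∑ s : S, ∑ t : T, PjointClass p cU cV s t *
            Real.logb 2 (PjointClass p cU cV s t) := by
      rw [← Finset.sum_add_distrib]
      exact Finset.sum_congr rfl fun s _ => h1 s
    linarith
  -- Step C : log-sum inequality
  have hC : ∑ s : S, ∑ t : T, PjointClass p cU cV s t *
        Real.logb 2 (PjointClass p cU cV s t / Pclass (margU p) cU s)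
      ≤ ∑ u : U, ∑ t : T, PclassV p cV u t *
        Real.logb 2 (PclassV p cV u t / margU p u) := by
    have key : ∀ t : T, ∑ s : S, PjointClass p cU cV s t *
          Real.logb 2 (PjointClass p cU cV s t / Pclass (margU p) cU s)
        ≤ ∑ u : U, PclassV p cV u t * Real.logb 2 (PclassV p cV u t / margU p u) := by
      intro t
      rw [fiber_sum cU (fun u => PclassV p cV u t *
            Real.logb 2 (PclassV p cV u t / margU p u))]
      refine Finset.sum_le_sum fun s _ => ?_
      have hRe : PjointClass p cU cV s t
          = ∑ u ∈ Finset.univ.filter (fun u => cU u = s), PclassV p cV u t := by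
        rw [hR s t, Finset.sum_filter]
      have hPe : Pclass (margU p) cU s
          = ∑ u ∈ Finset.univ.filter (fun u => cU u = s), margU p u := by
        unfold Pclass
        rw [Finset.sum_filter]
      rw [hRe, hPe]
      exact logsum_logb _ _ _ (fun u _ => hq0 u t) (fun u _ => hm0 u)
        (fun u _ h => hqm u t h)
    calc ∑ s : S, ∑ t : T, PjointClass p cU cV s t *
          Real.logb 2 (PjointClass p cU cV s t / Pclass (margU p) cU s)
        = ∑ t : T, ∑ s : S, PjointClass p cU cV s t *
          Real.logb 2 (PjointClass p cU cV s t / Pclass (margU p) cU s) := Finset.sum_comm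
      _ ≤ ∑ t : T, ∑ u : U, PclassV p cV u t *
          Real.logb 2 (PclassV p cV u t / margU p u) :=
          Finset.sum_le_sum fun t _ => key t
      _ = ∑ u : U, ∑ t : T, PclassV p cV u t *
          Real.logb 2 (PclassV p cV u t / margU p u) := Finset.sum_comm
  -- Step D : merging over u-classes
  have hD : ∑ u : U, ∑ t : T, PclassV p cV u t * Real.logb 2 (PclassV p cV u t)
      ≤ ∑ s : S, ∑ t : T, PjointClass p cU cV s t *
          Real.logb 2 (PjointClass p cU cV s t) := by
    have key : ∀ t : T, ∑ u : U, PclassV p cV u t * Real.logb 2 (PclassV p cV u t)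
        ≤ ∑ s : S, PjointClass p cU cV s t * Real.logb 2 (PjointClass p cU cV s t) := by
      intro t
      rw [fiber_sum cU (fun u => PclassV p cV u t * Real.logb 2 (PclassV p cV u t))]
      refine Finset.sum_le_sum fun s _ => ?_
      have hRe : PjointClass p cU cV s t
          = ∑ u ∈ Finset.univ.filter (fun u => cU u = s), PclassV p cV u t := by
        rw [hR s t, Finset.sum_filter]
      rw [hRe]
      exact sum_mul_logb_le _ _ (fun u _ => hq0 u t)
    calc ∑ u : U, ∑ t : T, PclassV p cV u t * Real.logb 2 (PclassV p cV u t)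
        = ∑ t : T, ∑ u : U, PclassV p cV u t * Real.logb 2 (PclassV p cV u t) :=
          Finset.sum_comm
      _ ≤ ∑ t : T, ∑ s : S, PjointClass p cU cV s t *
          Real.logb 2 (PjointClass p cU cV s t) := Finset.sum_le_sum fun t _ => key t
      _ = ∑ s : S, ∑ t : T, PjointClass p cU cV s t *
          Real.logb 2 (PjointClass p cU cV s t) := Finset.sum_comm
  -- Step E : merging over v-classes
  have hE : ∑ u : U, ∑ v : V, p u v * Real.logb 2 (p u v)
      ≤ ∑ u : U, ∑ t : T, PclassV p cV u t * Real.logb 2 (PclassV p cV u t) := by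
    refine Finset.sum_le_sum fun u _ => ?_
    rw [fiber_sum cV (fun v => p u v * Real.logb 2 (p u v))]
    refine Finset.sum_le_sum fun t _ => ?_
    have hqe : PclassV p cV u t
        = ∑ v ∈ Finset.univ.filter (fun v => cV v = t), p u v := by
      unfold PclassV
      rw [Finset.sum_filter]
    rw [hqe]
    exact sum_mul_logb_le _ _ (fun v _ => hp0 u v)
  refine ⟨?_, ?_, ?_⟩
  · rw [hB]
    unfold semCondEntropyV
    linarith
  · rw [hA]
    unfold semJointEntropy
    linarith
  · rw [hA]
    unfold shJointEntropy
    linarith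
end

section
/- (Chain rule of semantic mutual information) For any joint probability mass function p on the product of finite sets U and V and any partitions {U_s : s ∈ S} of U and {V_t : t ∈ T} of V, the following chain of inequalities holds: I_s(Ũ;Ṽ) ≤ H_s(Ṽ) − H(V|U) ≤ I(U;V) ≤ H(V) − H_s(Ṽ|U) ≤ I^s(Ũ;Ṽ), where I_s(Ũ;Ṽ) = H_s(Ũ) + H_s(Ṽ) − H(U,V) is the down semantic mutual information and I^s(Ũ;Ṽ) = H(U) + H(V) − H_s(Ũ,Ṽ) is the up semantic mutual information. -/
open Finset
open scoped Classical

lemma merge_sum_mul_logb_le {I J : Type*} [Fintype I] [Fintype J]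
    (q : I → ℝ) (hq : ∀ i, 0 ≤ q i) (c : I → J) :
    ∑ i : I, q i * Real.logb 2 (q i) ≤
      ∑ j : J, (∑ i : I, if c i = j then q i else 0) *
        Real.logb 2 (∑ i : I, if c i = j then q i else 0) := by
  have hrw : ∑ i : I, q i * Real.logb 2 (q i)
      = ∑ j : J, ∑ i : I, (if c i = j then q i * Real.logb 2 (q i) else 0) := by
    rw [Finset.sum_comm]
    exact Finset.sum_congr rfl fun i _ => by simp
  rw [hrw]
  refine Finset.sum_le_sum fun j _ => ?_
  set Q : ℝ := ∑ i : I, if c i = j then q i else 0 with hQdef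
  have hrw2 : Q * Real.logb 2 Q = ∑ i : I, (if c i = j then q i * Real.logb 2 Q else 0) := by
    rw [hQdef, Finset.sum_mul]
    exact Finset.sum_congr rfl fun i _ => by split <;> simp
  rw [hrw2]
  refine Finset.sum_le_sum fun i _ => ?_
  split_ifs with h
  · rcases eq_or_lt_of_le (hq i) with h0 | h0
    · rw [← h0]; simp
    · have hle : q i ≤ Q := by
        have := Finset.single_le_sum (f := fun i' => if c i' = j then q i' else 0)
          (fun i' _ => by split <;> simp [hq i']) (Finset.mem_univ i)
        simpa [h] using this
      exact mul_le_mul_of_nonneg_left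
        (Real.logb_le_logb_of_le (by norm_num) h0 hle) (hq i)
  · exact le_rfl

lemma sum_mul_logb_div {T : Type*} [Fintype T] (Q : T → ℝ) (hQ : ∀ t, 0 ≤ Q t) :
    ∑ t : T, Q t * Real.logb 2 (Q t / (∑ t' : T, Q t')) =
      ∑ t : T, Q t * Real.logb 2 (Q t) - (∑ t' : T, Q t') * Real.logb 2 (∑ t' : T, Q t') := by
  set m : ℝ := ∑ t' : T, Q t' with hm
  have key : ∀ t : T, Q t * Real.logb 2 (Q t / m)
      = Q t * Real.logb 2 (Q t) - Q t * Real.logb 2 m := by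
    intro t
    rcases eq_or_lt_of_le (hQ t) with h0 | h0
    · rw [← h0]; ring
    · have hmt : Q t ≤ m := Finset.single_le_sum (fun t' _ => hQ t') (Finset.mem_univ t)
      rw [Real.logb_div (ne_of_gt h0) (ne_of_gt (lt_of_lt_of_le h0 hmt))]
      ring
  rw [Finset.sum_congr rfl fun t _ => key t, Finset.sum_sub_distrib, ← Finset.sum_mul, ← hm]


/-- Chain rule of semantic mutual information: For any joint pmf `p` on `U × V`
and any partitions of `U` and `V` (encoded by surjective class-index maps `cU`, `cV`),
`I_s(Ũ;Ṽ) ≤ H_s(Ṽ) − H(V|U) ≤ I(U;V) ≤ H(V) − H_s(Ṽ|U) ≤ I^s(Ũ;Ṽ)`,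
where `H(V|U) = H(U,V) − H(U)`, `I_s(Ũ;Ṽ) = H_s(Ũ) + H_s(Ṽ) − H(U,V)` and
`I^s(Ũ;Ṽ) = H(U) + H(V) − H_s(Ũ,Ṽ)`. -/
theorem semantic_mutual_information_chain_rule
    {U V S T : Type*} [Fintype U] [Fintype V] [Fintype S] [Fintype T]
    (p : U → V → ℝ) (hp0 : ∀ u v, 0 ≤ p u v) (hp1 : ∑ u : U, ∑ v : V, p u v = 1)
    (cU : U → S) (hcU : Function.Surjective cU)
    (cV : V → T) (hcV : Function.Surjective cV) :
    downSMI p cU cV ≤ semEntropy (margV p) cV - (shJointEntropy p - shEntropy (margU p)) ∧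
    semEntropy (margV p) cV - (shJointEntropy p - shEntropy (margU p)) ≤ mutualInfo p ∧
    mutualInfo p ≤ shEntropy (margV p) - semCondEntropyV p cV ∧
    shEntropy (margV p) - semCondEntropyV p cV ≤ upSMI p cU cV := by
    classical
  have hmU : ∀ u, 0 ≤ margU p u := fun u => Finset.sum_nonneg fun v _ => hp0 u v
  have hmV : ∀ v, 0 ≤ margV p v := fun v => Finset.sum_nonneg fun u _ => hp0 u v
  have hF : ∀ u t, 0 ≤ PclassV p cV u t := fun u t =>
    Finset.sum_nonneg fun v _ => by split <;> simp [hp0 u v]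
  -- merging decreases entropy (for both marginals)
  have h1 : ∑ u : U, margU p u * Real.logb 2 (margU p u)
      ≤ ∑ s : S, Pclass (margU p) cU s * Real.logb 2 (Pclass (margU p) cU s) :=
    merge_sum_mul_logb_le (margU p) hmU cU
  have h2 : ∑ v : V, margV p v * Real.logb 2 (margV p v)
      ≤ ∑ t : T, Pclass (margV p) cV t * Real.logb 2 (Pclass (margV p) cV t) :=
    merge_sum_mul_logb_le (margV p) hmV cV
  -- merging V inside the joint
  have h3 : ∑ u : U, ∑ v : V, p u v * Real.logb 2 (p u v)
      ≤ ∑ u : U, ∑ t : T, PclassV p cV u t * Real.logb 2 (PclassV p cV u t) :=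
    Finset.sum_le_sum fun u _ => by
      simpa [PclassV] using merge_sum_mul_logb_le (p u) (hp0 u) cV
  -- merging U inside the (U, merged-V) joint
  have hc : ∀ t s, (∑ u : U, if cU u = s then PclassV p cV u t else 0)
      = PjointClass p cU cV s t := by
    intro t s
    simp only [PjointClass, PclassV]
    refine Finset.sum_congr rfl fun u _ => ?_
    by_cases h : cU u = s <;> simp [h]
  have h4 : ∑ u : U, ∑ t : T, PclassV p cV u t * Real.logb 2 (PclassV p cV u t)
      ≤ ∑ s : S, ∑ t : T, PjointClass p cU cV s t * Real.logb 2 (PjointClass p cU cV s t) := by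
    rw [Finset.sum_comm]
    calc ∑ t : T, ∑ u : U, PclassV p cV u t * Real.logb 2 (PclassV p cV u t)
        ≤ ∑ t : T, ∑ s : S, PjointClass p cU cV s t * Real.logb 2 (PjointClass p cU cV s t) :=
          Finset.sum_le_sum fun t _ => by
            simpa only [hc t] using
              merge_sum_mul_logb_le (fun u => PclassV p cV u t) (fun u => hF u t) cU
      _ = ∑ s : S, ∑ t : T, PjointClass p cU cV s t * Real.logb 2 (PjointClass p cU cV s t) :=
          Finset.sum_comm
  -- semantic conditional entropy identity
  have hFm : ∀ u, (∑ t : T, PclassV p cV u t) = margU p u := by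
    intro u
    simp only [PclassV, margU]
    rw [Finset.sum_comm]
    exact Finset.sum_congr rfl fun v _ => by simp
  have hCond : semCondEntropyV p cV
      = (∑ u : U, margU p u * Real.logb 2 (margU p u))
        - ∑ u : U, ∑ t : T, PclassV p cV u t * Real.logb 2 (PclassV p cV u t) := by
    simp only [semCondEntropyV]
    have hx : ∀ u, ∑ t : T, PclassV p cV u t * Real.logb 2 (PclassV p cV u t / margU p u)
        = (∑ t : T, PclassV p cV u t * Real.logb 2 (PclassV p cV u t))
          - margU p u * Real.logb 2 (margU p u) := by
      intro u
      rw [← hFm u]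
      exact sum_mul_logb_div _ (fun t => hF u t)
    rw [Finset.sum_congr rfl fun u _ => hx u, Finset.sum_sub_distrib]
    ring
  have eU : shEntropy (margU p) = -∑ u : U, margU p u * Real.logb 2 (margU p u) := rfl
  have eV : shEntropy (margV p) = -∑ v : V, margV p v * Real.logb 2 (margV p v) := rfl
  have eJ : shJointEntropy p = -∑ u : U, ∑ v : V, p u v * Real.logb 2 (p u v) := rfl
  have eSJ : semJointEntropy p cU cV
      = -∑ s : S, ∑ t : T, PjointClass p cU cV s t * Real.logb 2 (PjointClass p cU cV s t) := rfl
  have eSU : semEntropy (margU p) cU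
      = -∑ s : S, Pclass (margU p) cU s * Real.logb 2 (Pclass (margU p) cU s) := rfl
  have eSV : semEntropy (margV p) cV
      = -∑ t : T, Pclass (margV p) cV t * Real.logb 2 (Pclass (margV p) cV t) := rfl
  refine ⟨?_, ?_, ?_, ?_⟩
  · simp only [downSMI]; linarith
  · simp only [mutualInfo]; linarith
  · simp only [mutualInfo]; linarith
  · simp only [upSMI]; linarith
end

section
/- For any joint probability mass function p on the product of finite sets U and V and any partitions {U_s : s ∈ S} of U and {V_t : t ∈ T} of V, the down semantic mutual information is at most the mutual information, which is at most the up semantic mutual information: I_s(Ũ;Ṽ) ≤ I(U;V) ≤ I^s(Ũ;Ṽ). -/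
open Finset
open scoped Classical



lemma grouping_le {U S : Type*} [Fintype U] [Fintype S] (p : U → ℝ) (hp : ∀ u, 0 ≤ p u)
    (c : U → S) :
    ∑ u : U, p u * Real.logb 2 (p u) ≤ ∑ s : S, Pclass p c s * Real.logb 2 (Pclass p c s) := by
  have hle : ∀ u, p u ≤ Pclass p c (c u) := by
    intro u
    have := Finset.single_le_sum (f := fun u' => if c u' = c u then p u' else 0)
      (fun i _ => by split <;> simp [hp i]) (Finset.mem_univ u)
    simpa [Pclass] using this
  have rhs : ∑ s : S, Pclass p c s * Real.logb 2 (Pclass p c s)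
      = ∑ u : U, p u * Real.logb 2 (Pclass p c (c u)) := by
    have : ∀ s : S, Pclass p c s * Real.logb 2 (Pclass p c s)
        = ∑ u : U, (if c u = s then p u * Real.logb 2 (Pclass p c (c u)) else 0) := by
      intro s
      rw [Pclass, Finset.sum_mul]
      refine Finset.sum_congr rfl fun u _ => ?_
      by_cases h : c u = s <;> simp [h, Pclass]
    rw [Finset.sum_congr rfl fun s _ => this s, Finset.sum_comm]
    refine Finset.sum_congr rfl fun u _ => ?_
    simp
  rw [rhs]
  refine Finset.sum_le_sum fun u _ => ?_
  rcases eq_or_lt_of_le (hp u) with h | h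
  · simp [← h]
  · exact mul_le_mul_of_nonneg_left
      (Real.logb_le_logb_of_le one_lt_two h (hle u)) (hp u)

/-- For any joint pmf `p` on `U × V` and any partitions of `U` and `V`
(encoded by surjective class-index maps `cU`, `cV`), the down semantic mutual information is
at most the mutual information, which is at most the up semantic mutual information:
`I_s(Ũ;Ṽ) ≤ I(U;V) ≤ I^s(Ũ;Ṽ)`. -/
theorem down_smi_le_mutual_info_le_up_smi
    {U V S T : Type*} [Fintype U] [Fintype V] [Fintype S] [Fintype T]
    (p : U → V → ℝ) (hp0 : ∀ u v, 0 ≤ p u v) (hp1 : ∑ u : U, ∑ v : V, p u v = 1)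
    (cU : U → S) (hcU : Function.Surjective cU)
    (cV : V → T) (hcV : Function.Surjective cV) :
    downSMI p cU cV ≤ mutualInfo p ∧ mutualInfo p ≤ upSMI p cU cV := by

  have hU : ∀ u, 0 ≤ margU p u := fun u => Finset.sum_nonneg fun v _ => hp0 u v
  have hV : ∀ v, 0 ≤ margV p v := fun v => Finset.sum_nonneg fun u _ => hp0 u v
  constructor
  · have h1 := grouping_le (margU p) hU cU
    have h2 := grouping_le (margV p) hV cV
    unfold downSMI mutualInfo semEntropy shEntropy
    linarith
  · have h := grouping_le (fun uv : U × V => p uv.1 uv.2) (fun uv => hp0 _ _)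
      (fun uv => (cU uv.1, cV uv.2))
    unfold mutualInfo upSMI semJointEntropy shJointEntropy
    have e1 : ∑ s : S, ∑ t : T, PjointClass p cU cV s t * Real.logb 2 (PjointClass p cU cV s t)
        = ∑ st : S × T, Pclass (fun uv : U × V => p uv.1 uv.2) (fun uv => (cU uv.1, cV uv.2)) st
            * Real.logb 2 (Pclass (fun uv : U × V => p uv.1 uv.2)
              (fun uv => (cU uv.1, cV uv.2)) st) := by
      rw [Fintype.sum_prod_type]
      refine Finset.sum_congr rfl fun s _ => Finset.sum_congr rfl fun t _ => ?_
      have : PjointClass p cU cV s t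
          = Pclass (fun uv : U × V => p uv.1 uv.2) (fun uv => (cU uv.1, cV uv.2)) (s, t) := by
        simp [PjointClass, Pclass, Fintype.sum_prod_type, Prod.ext_iff]
      rw [this]
    have e2 : ∑ u : U, ∑ v : V, p u v * Real.logb 2 (p u v)
        = ∑ uv : U × V, p uv.1 uv.2 * Real.logb 2 (p uv.1 uv.2) := by
      rw [Fintype.sum_prod_type]
    linarith
end

section
/- For any discrete memoryless channel given by a stochastic matrix W(y|x) from a finite input set X to a finite output set Y, and any partitions {X_s : s ∈ S} of X and {Y_t : t ∈ T} of Y, the semantic channel capacity is at least the Shannon channel capacity: C = sup over input probability mass functions p of I(X;Y) ≤ sup over input probability mass functions p of I^s(X̃;Ỹ) = C_s, where for each p the joint distribution is p(x)W(y|x). -/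
open Finset
open scoped Classical

lemma le_PjointClass_aux {U V S T : Type*} [Fintype U] [Fintype V]
    (q : U → V → ℝ) (hq : ∀ u v, 0 ≤ q u v) (cU : U → S) (cV : V → T) (u : U) (v : V) :
    q u v ≤ PjointClass q cU cV (cU u) (cV v) := by
  unfold PjointClass
  calc q u v = if cU u = cU u ∧ cV v = cV v then q u v else 0 := by simp
    _ ≤ ∑ v' : V, if cU u = cU u ∧ cV v' = cV v then q u v' else 0 :=
        Finset.single_le_sum
          (f := fun v' => if cU u = cU u ∧ cV v' = cV v then q u v' else 0)
          (fun v' _ => by split_ifs; exacts [hq u v', le_rfl]) (Finset.mem_univ v)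
    _ ≤ ∑ u' : U, ∑ v' : V, if cU u' = cU u ∧ cV v' = cV v then q u' v' else 0 :=
        Finset.single_le_sum
          (f := fun u' => ∑ v' : V, if cU u' = cU u ∧ cV v' = cV v then q u' v' else 0)
          (fun u' _ => Finset.sum_nonneg fun v' _ => by
            split_ifs; exacts [hq u' v', le_rfl]) (Finset.mem_univ u)

lemma PjointClass_nonneg_aux {U V S T : Type*} [Fintype U] [Fintype V]
    (q : U → V → ℝ) (hq : ∀ u v, 0 ≤ q u v) (cU : U → S) (cV : V → T) (s : S) (t : T) :
    0 ≤ PjointClass q cU cV s t :=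
  Finset.sum_nonneg fun u _ => Finset.sum_nonneg fun v _ => by
    split_ifs; exacts [hq u v, le_rfl]

/-- Grouping identity: `Σ_{s,t} Q(s,t) f(s,t) = Σ_{u,v} q(u,v) f(cU u, cV v)`. -/
lemma group_sum_aux {U V S T : Type*} [Fintype U] [Fintype V] [Fintype S] [Fintype T]
    (q : U → V → ℝ) (cU : U → S) (cV : V → T) (f : S → T → ℝ) :
    ∑ s : S, ∑ t : T, PjointClass q cU cV s t * f s t
      = ∑ u : U, ∑ v : V, q u v * f (cU u) (cV v) := by
  unfold PjointClass
  simp only [Finset.sum_mul, ite_mul, zero_mul]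
  have key : ∀ (u : U) (v : V),
      (∑ s : S, ∑ t : T, if cU u = s ∧ cV v = t then q u v * f s t else 0)
        = q u v * f (cU u) (cV v) := by
    intro u v
    simp [ite_and, Finset.sum_ite_eq]
  calc ∑ s : S, ∑ t : T, ∑ u : U, ∑ v : V,
          (if cU u = s ∧ cV v = t then q u v * f s t else 0)
      = ∑ s : S, ∑ u : U, ∑ t : T, ∑ v : V,
          (if cU u = s ∧ cV v = t then q u v * f s t else 0) :=
        Finset.sum_congr rfl fun s _ => Finset.sum_comm
    _ = ∑ u : U, ∑ s : S, ∑ t : T, ∑ v : V,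
          (if cU u = s ∧ cV v = t then q u v * f s t else 0) := Finset.sum_comm
    _ = ∑ u : U, ∑ s : S, ∑ v : V, ∑ t : T,
          (if cU u = s ∧ cV v = t then q u v * f s t else 0) :=
        Finset.sum_congr rfl fun u _ => Finset.sum_congr rfl fun s _ => Finset.sum_comm
    _ = ∑ u : U, ∑ v : V, ∑ s : S, ∑ t : T,
          (if cU u = s ∧ cV v = t then q u v * f s t else 0) :=
        Finset.sum_congr rfl fun u _ => Finset.sum_comm
    _ = ∑ u : U, ∑ v : V, q u v * f (cU u) (cV v) :=
        Finset.sum_congr rfl fun u _ => Finset.sum_congr rfl fun v _ => key u v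

/-- Semantic joint entropy is at most Shannon joint entropy. -/
lemma semJointEntropy_le_shJointEntropy_aux {U V S T : Type*}
    [Fintype U] [Fintype V] [Fintype S] [Fintype T]
    (q : U → V → ℝ) (hq : ∀ u v, 0 ≤ q u v) (cU : U → S) (cV : V → T) :
    semJointEntropy q cU cV ≤ shJointEntropy q := by
  unfold semJointEntropy shJointEntropy
  rw [neg_le_neg_iff]
  rw [group_sum_aux q cU cV (fun s t => Real.logb 2 (PjointClass q cU cV s t))]
  refine Finset.sum_le_sum fun u _ => Finset.sum_le_sum fun v _ => ?_
  rcases eq_or_lt_of_le (hq u v) with h | h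
  · simp [← h]
  · refine mul_le_mul_of_nonneg_left ?_ (hq u v)
    exact (Real.logb_le_logb one_lt_two h
      (lt_of_lt_of_le h (le_PjointClass_aux q hq cU cV u v))).mpr
      (le_PjointClass_aux q hq cU cV u v)

lemma mutualInfo_le_upSMI_aux {U V S T : Type*}
    [Fintype U] [Fintype V] [Fintype S] [Fintype T]
    (q : U → V → ℝ) (hq : ∀ u v, 0 ≤ q u v) (cU : U → S) (cV : V → T) :
    mutualInfo q ≤ upSMI q cU cV := by
  unfold mutualInfo upSMI
  have := semJointEntropy_le_shJointEntropy_aux q hq cU cV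
  linarith

/-- `−x log₂ x ≤ 1/ln 2` for `x ∈ [0,1]`. -/
lemma neg_mul_logb_le_aux (x : ℝ) (h0 : 0 ≤ x) (h1 : x ≤ 1) :
    -(x * Real.logb 2 x) ≤ 1 / Real.log 2 := by
  have hl2 : 0 < Real.log 2 := Real.log_pos one_lt_two
  rcases eq_or_lt_of_le h0 with h | h
  · rw [← h]; simp; positivity
  · have hlog : -Real.log x ≤ x⁻¹ - 1 := by
      have := Real.log_le_sub_one_of_pos (inv_pos.mpr h)
      rwa [Real.log_inv] at this
    have hx : -(x * Real.log x) ≤ 1 := by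
      have h2 : x * (-Real.log x) ≤ x * (x⁻¹ - 1) := mul_le_mul_of_nonneg_left hlog h0
      rw [mul_sub, mul_inv_cancel₀ (ne_of_gt h)] at h2
      nlinarith
    rw [Real.logb, div_eq_inv_mul, one_div]
    calc -(x * ((Real.log 2)⁻¹ * Real.log x)) = (Real.log 2)⁻¹ * (-(x * Real.log x)) := by ring
      _ ≤ (Real.log 2)⁻¹ * 1 := mul_le_mul_of_nonneg_left hx (by positivity)
      _ = (Real.log 2)⁻¹ := mul_one _

lemma shEntropy_le_aux {U : Type*} [Fintype U] (r : U → ℝ)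
    (h0 : ∀ u, 0 ≤ r u) (h1 : ∀ u, r u ≤ 1) :
    shEntropy r ≤ (Fintype.card U : ℝ) / Real.log 2 := by
  unfold shEntropy
  calc -∑ u : U, r u * Real.logb 2 (r u) = ∑ u : U, -(r u * Real.logb 2 (r u)) := by
        rw [Finset.sum_neg_distrib]
    _ ≤ ∑ _u : U, 1 / Real.log 2 :=
        Finset.sum_le_sum fun u _ => neg_mul_logb_le_aux (r u) (h0 u) (h1 u)
    _ = (Fintype.card U : ℝ) / Real.log 2 := by
        rw [Finset.sum_const, Finset.card_univ, nsmul_eq_mul]; ring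

lemma semJointEntropy_nonneg_aux {U V S T : Type*}
    [Fintype U] [Fintype V] [Fintype S] [Fintype T]
    (q : U → V → ℝ) (hq : ∀ u v, 0 ≤ q u v) (hsum : ∑ u : U, ∑ v : V, q u v = 1)
    (cU : U → S) (cV : V → T) :
    0 ≤ semJointEntropy q cU cV := by
  unfold semJointEntropy
  rw [neg_nonneg]
  refine Finset.sum_nonpos fun s _ => Finset.sum_nonpos fun t _ => ?_
  have hQ0 := PjointClass_nonneg_aux q hq cU cV s t
  have hQ1 : PjointClass q cU cV s t ≤ 1 := by
    rw [← hsum]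
    refine Finset.sum_le_sum fun u _ => Finset.sum_le_sum fun v _ => ?_
    split_ifs; exacts [le_rfl, hq u v]
  exact mul_nonpos_of_nonneg_of_nonpos hQ0 (Real.logb_nonpos one_lt_two hQ0 hQ1)

lemma upSMI_bound_aux {X Y S T : Type*} [Fintype X] [Fintype Y] [Fintype S] [Fintype T]
    (W : X → Y → ℝ) (hW0 : ∀ x y, 0 ≤ W x y) (hW1 : ∀ x, ∑ y : Y, W x y = 1)
    (cX : X → S) (cY : Y → T)
    (p : X → ℝ) (hp0 : ∀ x, 0 ≤ p x) (hp1 : ∑ x : X, p x = 1) :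
    upSMI (fun x y => p x * W x y) cX cY ≤
      (Fintype.card X : ℝ) / Real.log 2 + (Fintype.card Y : ℝ) / Real.log 2 := by
  set q : X → Y → ℝ := fun x y => p x * W x y with hqdef
  have hq : ∀ x y, 0 ≤ q x y := fun x y => mul_nonneg (hp0 x) (hW0 x y)
  have hsum : ∑ x : X, ∑ y : Y, q x y = 1 := by
    simp only [hqdef, ← Finset.mul_sum, hW1, mul_one, hp1]
  have hmU : ∀ x, margU q x = p x := by
    intro x; unfold margU; simp only [hqdef, ← Finset.mul_sum, hW1, mul_one]
  have hp_le : ∀ x, p x ≤ 1 := by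
    intro x
    rw [← hp1]
    exact Finset.single_le_sum (fun x' _ => hp0 x') (Finset.mem_univ x)
  have hW_le : ∀ x y, W x y ≤ 1 := by
    intro x y
    rw [← hW1 x]
    exact Finset.single_le_sum (fun y' _ => hW0 x y') (Finset.mem_univ y)
  have hmV0 : ∀ y, 0 ≤ margV q y := fun y => Finset.sum_nonneg fun x _ => hq x y
  have hmV1 : ∀ y, margV q y ≤ 1 := by
    intro y
    unfold margV
    calc ∑ x : X, q x y ≤ ∑ x : X, p x :=
          Finset.sum_le_sum fun x _ => by
            calc q x y = p x * W x y := rfl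
              _ ≤ p x * 1 := mul_le_mul_of_nonneg_left (hW_le x y) (hp0 x)
              _ = p x := mul_one _
      _ = 1 := hp1
  have h1 : shEntropy (margU q) ≤ (Fintype.card X : ℝ) / Real.log 2 :=
    shEntropy_le_aux _ (fun x => by rw [hmU x]; exact hp0 x)
      (fun x => by rw [hmU x]; exact hp_le x)
  have h2 : shEntropy (margV q) ≤ (Fintype.card Y : ℝ) / Real.log 2 :=
    shEntropy_le_aux _ hmV0 hmV1
  have h3 : 0 ≤ semJointEntropy q cX cY :=
    semJointEntropy_nonneg_aux q hq hsum cX cY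
  unfold upSMI
  linarith

/-- For any discrete memoryless channel `W(y|x)` from a finite input set `X`
to a finite output set `Y`, and any partitions of `X` and `Y` (encoded by surjective
class-index maps `cX`, `cY`), the semantic channel capacity is at least the Shannon channel
capacity: `C = sup_p I(X;Y) ≤ sup_p I^s(X̃;Ỹ) = C_s`, where for each input pmf `p` the
joint distribution is `q(x,y) = p(x) W(y|x)`. -/
theorem shannon_capacity_le_semantic_capacity
    {X Y S T : Type*} [Fintype X] [Fintype Y] [Fintype S] [Fintype T]
    (W : X → Y → ℝ) (hW0 : ∀ x y, 0 ≤ W x y) (hW1 : ∀ x, ∑ y : Y, W x y = 1)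
    (cX : X → S) (hcX : Function.Surjective cX)
    (cY : Y → T) (hcY : Function.Surjective cY) :
    sSup {r : ℝ | ∃ p : X → ℝ, (∀ x, 0 ≤ p x) ∧ (∑ x : X, p x = 1) ∧
        r = mutualInfo (fun x y => p x * W x y)} ≤
    sSup {r : ℝ | ∃ p : X → ℝ, (∀ x, 0 ≤ p x) ∧ (∑ x : X, p x = 1) ∧
        r = upSMI (fun x y => p x * W x y) cX cY} := by
  by_cases hX : Nonempty X
  · have hcard : (0 : ℝ) < (Fintype.card X : ℝ) := by
      have := Fintype.card_pos_iff.mpr hX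
      exact_mod_cast this
    set punif : X → ℝ := fun _ => (Fintype.card X : ℝ)⁻¹ with hpu
    have hpu0 : ∀ x, 0 ≤ punif x := fun x => by positivity
    have hpu1 : ∑ x : X, punif x = 1 := by
      simp [hpu, Finset.sum_const, Finset.card_univ]
    have hAne : {r : ℝ | ∃ p : X → ℝ, (∀ x, 0 ≤ p x) ∧ (∑ x : X, p x = 1) ∧
        r = mutualInfo (fun x y => p x * W x y)}.Nonempty :=
      ⟨_, punif, hpu0, hpu1, rfl⟩
    have hBdd : BddAbove {r : ℝ | ∃ p : X → ℝ, (∀ x, 0 ≤ p x) ∧ (∑ x : X, p x = 1) ∧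
        r = upSMI (fun x y => p x * W x y) cX cY} := by
      refine ⟨(Fintype.card X : ℝ) / Real.log 2 + (Fintype.card Y : ℝ) / Real.log 2, ?_⟩
      rintro r ⟨p, hp0, hp1, rfl⟩
      exact upSMI_bound_aux W hW0 hW1 cX cY p hp0 hp1
    refine csSup_le hAne ?_
    rintro r ⟨p, hp0, hp1, rfl⟩
    refine le_trans (mutualInfo_le_upSMI_aux _
      (fun x y => mul_nonneg (hp0 x) (hW0 x y)) cX cY) ?_
    exact le_csSup hBdd ⟨p, hp0, hp1, rfl⟩
  · haveI : IsEmpty X := not_nonempty_iff.mp hX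
    have hempty : ∀ f : (X → ℝ) → ℝ,
        {r : ℝ | ∃ p : X → ℝ, (∀ x, 0 ≤ p x) ∧ (∑ x : X, p x = 1) ∧ r = f p} = ∅ := by
      intro f
      ext r
      simp only [Set.mem_setOf_eq, Set.mem_empty_iff_false, iff_false]
      rintro ⟨p, -, h1, -⟩
      rw [Finset.univ_eq_empty (α := X), Finset.sum_empty] at h1
      exact one_ne_zero h1.symm
    rw [hempty (fun p => mutualInfo (fun x y => p x * W x y)),
        hempty (fun p => upSMI (fun x y => p x * W x y) cX cY)]
end

section
/- Let X and X̂ be finite sets, p a probability mass function on X, and fix partitions {X_s : s ∈ S} of X and {X̂_t : t ∈ T} of X̂. For any nonempty set P of conditional probability mass functions q(x̂|x), the minimum down semantic mutual information over P is at most the minimum mutual information over P: inf_{q ∈ P} I_s(X̃;X̂̃) ≤ inf_{q ∈ P} I(X;X̂), where both are computed from the joint distribution p(x)q(x̂|x). In particular, the semantic rate-distortion function is no more than the classical rate-distortion function computed over the same feasible set of test channels. -/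
open Finset
open scoped Classical

lemma Pclass_nonneg {U S : Type*} [Fintype U] (p : U → ℝ) (hp : ∀ u, 0 ≤ p u)
    (c : U → S) (s : S) : 0 ≤ Pclass p c s := by
  apply Finset.sum_nonneg; intro u _; split <;> simp [hp u]

lemma sum_Pclass {U S : Type*} [Fintype U] [Fintype S] (p : U → ℝ) (c : U → S) :
    ∑ s : S, Pclass p c s = ∑ u : U, p u := by
  unfold Pclass
  rw [Finset.sum_comm]
  exact Finset.sum_congr rfl fun u _ => by simp

lemma le_Pclass {U S : Type*} [Fintype U] (p : U → ℝ) (hp : ∀ u, 0 ≤ p u)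
    (c : U → S) (u : U) : p u ≤ Pclass p c (c u) := by
  have := Finset.single_le_sum (f := fun u' => if c u' = c u then p u' else 0)
    (fun i _ => by by_cases h : c i = c u <;> simp [h, hp i]) (Finset.mem_univ u)
  simpa [Pclass] using this

lemma grouping {U S : Type*} [Fintype U] [Fintype S] (p : U → ℝ) (hp : ∀ u, 0 ≤ p u)
    (c : U → S) : semEntropy p c ≤ shEntropy p := by
  unfold semEntropy shEntropy
  rw [neg_le_neg_iff]
  have key : ∀ u : U, p u * Real.logb 2 (p u) ≤ p u * Real.logb 2 (Pclass p c (c u)) := by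
    intro u
    rcases eq_or_lt_of_le (hp u) with h | h
    · simp [← h]
    · exact mul_le_mul_of_nonneg_left
        (Real.logb_le_logb_of_le one_lt_two h (le_Pclass p hp c u)) (hp u)
  calc ∑ u : U, p u * Real.logb 2 (p u)
      ≤ ∑ u : U, p u * Real.logb 2 (Pclass p c (c u)) := Finset.sum_le_sum fun u _ => key u
    _ = ∑ s : S, ∑ u : U, (if c u = s then p u else 0) * Real.logb 2 (Pclass p c s) := by
        rw [Finset.sum_comm]
        refine Finset.sum_congr rfl fun u _ => ?_
        simp
    _ = ∑ s : S, Pclass p c s * Real.logb 2 (Pclass p c s) := by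
        refine Finset.sum_congr rfl fun s _ => ?_
        rw [Pclass, Finset.sum_mul]

lemma semEntropy_nonneg {U S : Type*} [Fintype U] [Fintype S] (p : U → ℝ)
    (hp : ∀ u, 0 ≤ p u) (hp1 : ∑ u : U, p u = 1) (c : U → S) :
    0 ≤ semEntropy p c := by
  unfold semEntropy
  rw [le_neg, neg_zero]
  apply Finset.sum_nonpos
  intro s _
  have h0 := Pclass_nonneg p hp c s
  have h1 : Pclass p c s ≤ 1 := by
    rw [← hp1, ← sum_Pclass p c]
    exact Finset.single_le_sum (f := fun s => Pclass p c s)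
      (fun i _ => Pclass_nonneg p hp c i) (Finset.mem_univ s)
  exact mul_nonpos_of_nonneg_of_nonpos h0 (Real.logb_nonpos one_lt_two h0 h1)

lemma neg_mul_logb_le (x : ℝ) (hx : 0 ≤ x) : -(x * Real.logb 2 x) ≤ 1 / Real.log 2 := by
  have hlog2 : 0 < Real.log 2 := Real.log_pos one_lt_two
  rcases eq_or_lt_of_le hx with h | h
  · simp [← h]; positivity
  · have : Real.log x⁻¹ ≤ x⁻¹ - 1 := Real.log_le_sub_one_of_pos (by positivity)
    have key : -(x * Real.log x) ≤ 1 := by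
      have h2 : -(x * Real.log x) = x * Real.log x⁻¹ := by
        rw [Real.log_inv]; ring
      rw [h2]
      calc x * Real.log x⁻¹ ≤ x * (x⁻¹ - 1) := mul_le_mul_of_nonneg_left this h.le
        _ = 1 - x := by field_simp
        _ ≤ 1 := by linarith
    calc -(x * Real.logb 2 x) = -(x * Real.log x) / Real.log 2 := by
          rw [Real.logb]; ring
      _ ≤ 1 / Real.log 2 := by gcongr

lemma shJointEntropy_le {U V : Type*} [Fintype U] [Fintype V] (p : U → V → ℝ)
    (hp : ∀ u v, 0 ≤ p u v) :
    shJointEntropy p ≤ (Fintype.card U * Fintype.card V : ℝ) / Real.log 2 := by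
  unfold shJointEntropy
  rw [neg_le]
  calc -((Fintype.card U * Fintype.card V : ℝ) / Real.log 2)
      = ∑ _u : U, ∑ _v : V, -(1 / Real.log 2) := by
        simp [Finset.sum_const, Finset.card_univ]; ring
    _ ≤ ∑ u : U, ∑ v : V, p u v * Real.logb 2 (p u v) := by
        apply Finset.sum_le_sum; intro u _; apply Finset.sum_le_sum; intro v _
        have := neg_mul_logb_le (p u v) (hp u v)
        linarith

lemma downSMI_le_mutualInfo {U V S T : Type*} [Fintype U] [Fintype V] [Fintype S] [Fintype T]
    (p : U → V → ℝ) (hp : ∀ u v, 0 ≤ p u v) (cU : U → S) (cV : V → T) :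
    downSMI p cU cV ≤ mutualInfo p := by
  unfold downSMI mutualInfo
  have h1 : semEntropy (margU p) cU ≤ shEntropy (margU p) :=
    grouping _ (fun u => Finset.sum_nonneg fun v _ => hp u v) _
  have h2 : semEntropy (margV p) cV ≤ shEntropy (margV p) :=
    grouping _ (fun v => Finset.sum_nonneg fun u _ => hp u v) _
  linarith

/-- For a pmf `p` on `X`, partitions of `X` and `X̂` (surjective class-index maps
`cX`, `cT`), and any nonempty set `P` of test channels `q(x̂|x)`, the infimum of the down
semantic mutual information over `P` is at most the infimum of the mutual information over `P`,
both computed from the joint distribution `r(x,x̂) = p(x) q(x̂|x)`.  In particular the semantic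
rate-distortion function is no more than the classical rate-distortion function computed over
the same feasible set of test channels. -/
theorem inf_down_smi_le_inf_mutual_info
    {X Xhat S T : Type*} [Fintype X] [Fintype Xhat] [Fintype S] [Fintype T]
    (p : X → ℝ) (hp0 : ∀ x, 0 ≤ p x) (hp1 : ∑ x : X, p x = 1)
    (cX : X → S) (hcX : Function.Surjective cX)
    (cT : Xhat → T) (hcT : Function.Surjective cT)
    (P : Set (X → Xhat → ℝ)) (hPne : P.Nonempty)
    (hP : ∀ q ∈ P, (∀ x xh, 0 ≤ q x xh) ∧ ∀ x, ∑ xh : Xhat, q x xh = 1) :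
    sInf ((fun q => downSMI (fun x xh => p x * q x xh) cX cT) '' P) ≤
    sInf ((fun q => mutualInfo (fun x xh => p x * q x xh)) '' P) := by
  have hr0 : ∀ q ∈ P, ∀ x xh, 0 ≤ p x * q x xh := fun q hq x xh =>
    mul_nonneg (hp0 x) ((hP q hq).1 x xh)
  have hbdd : BddBelow ((fun q => downSMI (fun x xh => p x * q x xh) cX cT) '' P) := by
    refine ⟨-((Fintype.card X * Fintype.card Xhat : ℝ) / Real.log 2), ?_⟩
    rintro y ⟨q, hq, rfl⟩
    have hU1 : ∑ x : X, margU (fun x xh => p x * q x xh) x = 1 := by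
      unfold margU
      calc ∑ x : X, ∑ xh : Xhat, p x * q x xh = ∑ x : X, p x * ∑ xh : Xhat, q x xh := by
            simp [Finset.mul_sum]
        _ = 1 := by
            rw [← hp1]
            exact Finset.sum_congr rfl fun x _ => by rw [(hP q hq).2 x, mul_one]
    have hV1 : ∑ xh : Xhat, margV (fun x xh => p x * q x xh) xh = 1 := by
      unfold margV
      rw [Finset.sum_comm]
      calc ∑ x : X, ∑ xh : Xhat, p x * q x xh = ∑ x : X, p x * ∑ xh : Xhat, q x xh := by
            simp [Finset.mul_sum]
        _ = 1 := by
            rw [← hp1]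
            exact Finset.sum_congr rfl fun x _ => by rw [(hP q hq).2 x, mul_one]
    have e1 := semEntropy_nonneg (margU (fun x xh => p x * q x xh))
      (fun x => Finset.sum_nonneg fun xh _ => hr0 q hq x xh) hU1 cX
    have e2 := semEntropy_nonneg (margV (fun x xh => p x * q x xh))
      (fun xh => Finset.sum_nonneg fun x _ => hr0 q hq x xh) hV1 cT
    have e3 := shJointEntropy_le (fun x xh => p x * q x xh) (hr0 q hq)
    unfold downSMI
    linarith
  apply le_csInf (hPne.image _)
  rintro b ⟨q, hq, rfl⟩
  exact (csInf_le hbdd ⟨q, hq, rfl⟩).trans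
    (downSMI_le_mutualInfo _ (hr0 q hq) cX cT)
end

section
/- Let U be a finite set, p a probability mass function on U with p(u) > 0 for all u, and {U_s : s ∈ S} a partition of U; write s(u) for the class index of u and P(U_s) = Σ_{u∈U_s} p(u). For ε > 0, n ≥ 1, and a semantic sequence ũ^n = (s_1,...,s_n) ∈ S^n, define the synonymous typical set B_ε^(n)(ũ^n) as the set of u^n = (u_1,...,u_n) ∈ U^n with s(u_k) = s_k for all k such that | −(1/n) Σ_k log₂ p(u_k) − H(U) | < ε, | −(1/n) Σ_k log₂ P(U_{s_k}) − H_s(Ũ) | < ε, and | −(1/n) Σ_k log₂ (p(u_k)/P(U_{s_k})) − (H(U) − H_s(Ũ)) | < ε. Then for every n and every ũ^n, |B_ε^(n)(ũ^n)| ≤ 2^{n(H(U) − H_s(Ũ) + ε)}. -/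
open Finset
open scoped Classical

/-- The synonymous typical set `B_ε^(n)(ũ^n)` associated with a semantic sequence
`ũ^n = (s_1,…,s_n) ∈ S^n`: syntactic sequences `u^n ∈ U^n` consistent with `ũ^n`
(`s(u_k) = s_k` for all `k`) satisfying the three `ε`-typicality conditions on
`−(1/n) Σ_k log₂ p(u_k)`, `−(1/n) Σ_k log₂ P(U_{s_k})`, and
`−(1/n) Σ_k log₂ (p(u_k)/P(U_{s_k}))`. -/
noncomputable def synTypicalSet {U S : Type*} [Fintype U] [Fintype S]
    (p : U → ℝ) (c : U → S) (ε : ℝ) (n : ℕ) (us : Fin n → S) : Finset (Fin n → U) :=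
  Finset.univ.filter (fun x : Fin n → U =>
    (∀ k, c (x k) = us k) ∧
    |(-(1 / (n : ℝ)) * ∑ k : Fin n, Real.logb 2 (p (x k))) - shEntropy p| < ε ∧
    |(-(1 / (n : ℝ)) * ∑ k : Fin n, Real.logb 2 (Pclass p c (us k))) - semEntropy p c| < ε ∧
    |(-(1 / (n : ℝ)) * ∑ k : Fin n, Real.logb 2 (p (x k) / Pclass p c (us k))) -
        (shEntropy p - semEntropy p c)| < ε)

/-- Let `p` be a pmf on `U` with `p u > 0` for all `u` and a partition encoded by
a surjective class-index map `c : U → S`.  For every `ε > 0`, every `n ≥ 1`, and every semantic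
sequence `ũ^n ∈ S^n`, the synonymous typical set satisfies
`|B_ε^(n)(ũ^n)| ≤ 2^{n (H(U) − H_s(Ũ) + ε)}`. -/
theorem synTypicalSet_card_upper_bound
    {U S : Type*} [Fintype U] [Fintype S]
    (p : U → ℝ) (hp0 : ∀ u, 0 < p u) (hp1 : ∑ u : U, p u = 1)
    (c : U → S) (hc : Function.Surjective c)
    (ε : ℝ) (hε : 0 < ε) (n : ℕ) (hn : 1 ≤ n) (us : Fin n → S) :
    ((synTypicalSet p c ε n us).card : ℝ) ≤
      2 ^ ((n : ℝ) * (shEntropy p - semEntropy p c + ε)) := by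
  classical
  set K : ℝ := shEntropy p - semEntropy p c + ε with hKdef
  have hnpos : (0 : ℝ) < n := by exact_mod_cast hn
  have hP : ∀ s, 0 < Pclass p c s := by
    intro s
    obtain ⟨u, hu⟩ := hc s
    unfold Pclass
    apply Finset.sum_pos'
    · intro i _
      split <;> [exact (hp0 i).le; exact le_rfl]
    · exact ⟨u, Finset.mem_univ u, by simp [hu, hp0 u]⟩
  set B := synTypicalSet p c ε n us with hB
  -- lower bound on the conditional probability of each typical sequence
  have hq : ∀ x ∈ B, (2 : ℝ) ^ (-(n : ℝ) * K) ≤ ∏ k : Fin n, p (x k) / Pclass p c (us k) := by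
    intro x hx
    rw [hB, synTypicalSet, Finset.mem_filter] at hx
    obtain ⟨-, -, -, -, h3⟩ := hx
    have hsumgt : -( (n : ℝ) * K) <
        ∑ k : Fin n, Real.logb 2 (p (x k) / Pclass p c (us k)) := by
      have := (abs_lt.mp h3).2
      have h' : -(1 / (n : ℝ)) * ∑ k : Fin n, Real.logb 2 (p (x k) / Pclass p c (us k)) < K := by
        rw [hKdef]; linarith
      have hne : (n : ℝ) ≠ 0 := hnpos.ne'
      have hcalc : -(∑ k : Fin n, Real.logb 2 (p (x k) / Pclass p c (us k))) < (n : ℝ) * K := by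
        calc -(∑ k : Fin n, Real.logb 2 (p (x k) / Pclass p c (us k)))
            = (n : ℝ) * (-(1 / (n : ℝ)) * ∑ k : Fin n, Real.logb 2 (p (x k) / Pclass p c (us k))) := by
              field_simp
          _ < (n : ℝ) * K := mul_lt_mul_of_pos_left h' hnpos
      linarith
    have hprod : ∏ k : Fin n, p (x k) / Pclass p c (us k) =
        (2 : ℝ) ^ (∑ k : Fin n, Real.logb 2 (p (x k) / Pclass p c (us k))) := by
      rw [Real.rpow_sum_of_pos (by norm_num : (0:ℝ) < 2)]
      refine Finset.prod_congr rfl fun k _ => ?_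
      rw [Real.rpow_logb (by norm_num) (by norm_num)
        (div_pos (hp0 _) (hP _))]
    rw [hprod]
    apply Real.rpow_le_rpow_of_exponent_le (by norm_num)
    linarith
  -- the total conditional probability mass is at most 1
  have hsum : ∑ x ∈ B, ∏ k : Fin n, p (x k) / Pclass p c (us k) ≤ 1 := by
    have hcons : ∀ x ∈ B, ∀ k, c (x k) = us k := by
      intro x hx
      rw [hB, synTypicalSet, Finset.mem_filter] at hx
      exact hx.2.1
    have step1 : ∑ x ∈ B, ∏ k : Fin n, p (x k) / Pclass p c (us k) =
        ∑ x ∈ B, ∏ k : Fin n, (if c (x k) = us k then p (x k) else 0) / Pclass p c (us k) := by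
      refine Finset.sum_congr rfl fun x hx => Finset.prod_congr rfl fun k _ => ?_
      rw [if_pos (hcons x hx k)]
    rw [step1]
    have step2 : ∑ x ∈ B, ∏ k : Fin n, (if c (x k) = us k then p (x k) else 0) / Pclass p c (us k)
        ≤ ∑ x : Fin n → U, ∏ k : Fin n, (if c (x k) = us k then p (x k) else 0) / Pclass p c (us k) := by
      apply Finset.sum_le_sum_of_subset_of_nonneg (Finset.subset_univ _)
      intro x _ _
      apply Finset.prod_nonneg
      intro k _
      apply div_nonneg _ (hP _).le
      split <;> [exact (hp0 _).le; exact le_rfl]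
    refine step2.trans ?_
    have : ∑ x : Fin n → U, ∏ k : Fin n, (if c (x k) = us k then p (x k) else 0) / Pclass p c (us k)
        = ∏ k : Fin n, ∑ u : U, (if c u = us k then p u else 0) / Pclass p c (us k) := by
      rw [Finset.prod_univ_sum, Fintype.piFinset_univ]
    rw [this]
    have : ∀ k : Fin n, ∑ u : U, (if c u = us k then p u else 0) / Pclass p c (us k) = 1 := by
      intro k
      rw [← Finset.sum_div]
      rw [div_eq_one_iff_eq (hP (us k)).ne']
      rfl
    rw [Finset.prod_congr rfl fun k _ => this k, Finset.prod_const_one]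
  -- combine
  have hcard : (B.card : ℝ) * (2 : ℝ) ^ (-(n : ℝ) * K) ≤ 1 := by
    calc (B.card : ℝ) * (2 : ℝ) ^ (-(n : ℝ) * K)
        = ∑ _x ∈ B, (2 : ℝ) ^ (-(n : ℝ) * K) := by rw [Finset.sum_const, nsmul_eq_mul]
      _ ≤ ∑ x ∈ B, ∏ k : Fin n, p (x k) / Pclass p c (us k) := Finset.sum_le_sum hq
      _ ≤ 1 := hsum
  calc (B.card : ℝ)
      = (B.card : ℝ) * (2 : ℝ) ^ (-(n : ℝ) * K) * (2 : ℝ) ^ ((n : ℝ) * K) := by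
        rw [mul_assoc, ← Real.rpow_add (by norm_num : (0:ℝ) < 2)]
        simp
    _ ≤ 1 * (2 : ℝ) ^ ((n : ℝ) * K) := by
        exact mul_le_mul_of_nonneg_right hcard (Real.rpow_nonneg (by norm_num) _)
    _ = 2 ^ ((n : ℝ) * K) := one_mul _
end

section
/- (Semantic source coding theorem, direct part) Let U be a finite set, p a probability mass function on U, and {U_s : s ∈ S} a partition of U with semantic entropy H_s(Ũ); write s(u) for the class index of u. For every R > H_s(Ũ) and every ε > 0, for all sufficiently large n there exist a finite set M with |M| ≤ 2^{nR}, an encoder φ : U^n → M, and a decoder ψ : M → U^n such that, when U_1,...,U_n are i.i.d. with distribution p, the probability that the decoded sequence differs from the source sequence in some semantic symbol, Pr( ∃k ≤ n, s(ψ(φ(U_1,...,U_n))_k) ≠ s(U_k) ), is less than ε. -/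
open Finset
open scoped Classical

lemma sum_prod_eq_prod_sum {α : Type*} [Fintype α] {n : ℕ} (f : Fin n → α → ℝ) :
    ∑ y : Fin n → α, ∏ k, f k (y k) = ∏ k, ∑ s, f k s := by
  rw [Finset.prod_univ_sum, Fintype.piFinset_univ]

lemma exp_one_point {α : Type*} [Fintype α] {n : ℕ} (q : α → ℝ) (hq1 : ∑ s, q s = 1)
    (k : Fin n) (h1 : α → ℝ) :
    ∑ y : Fin n → α, (∏ i, q (y i)) * h1 (y k) = ∑ s, q s * h1 s := by
  have key : ∀ y : Fin n → α, (∏ i, q (y i)) * h1 (y k)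
      = ∏ i, (q (y i) * (if i = k then h1 (y i) else 1)) := by
    intro y
    rw [Finset.prod_mul_distrib]
    congr 1
    simp
  simp only [key]
  rw [sum_prod_eq_prod_sum (fun i s => q s * (if i = k then h1 s else 1))]
  have hfac : ∀ i : Fin n, (∑ s, q s * (if i = k then h1 s else 1))
      = if i = k then (∑ s, q s * h1 s) else 1 := by
    intro i; by_cases hik : i = k <;> simp [hik, hq1]
  simp only [hfac]
  simp

lemma exp_two_point {α : Type*} [Fintype α] {n : ℕ} (q : α → ℝ) (hq1 : ∑ s, q s = 1)
    {k j : Fin n} (hkj : k ≠ j) (h1 h2 : α → ℝ) :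
    ∑ y : Fin n → α, (∏ i, q (y i)) * (h1 (y k) * h2 (y j))
      = (∑ s, q s * h1 s) * (∑ s, q s * h2 s) := by
  have key : ∀ y : Fin n → α, (∏ i, q (y i)) * (h1 (y k) * h2 (y j))
      = ∏ i, (q (y i) * ((if i = k then h1 (y i) else 1) * (if i = j then h2 (y i) else 1))) := by
    intro y
    simp only [Finset.prod_mul_distrib]
    simp
  simp only [key]
  rw [sum_prod_eq_prod_sum
    (fun i s => q s * ((if i = k then h1 s else 1) * (if i = j then h2 s else 1)))]
  have hfac : ∀ i : Fin n,
      (∑ s, q s * ((if i = k then h1 s else 1) * (if i = j then h2 s else 1)))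
      = (if i = k then (∑ s, q s * h1 s) else 1) * (if i = j then (∑ s, q s * h2 s) else 1) := by
    intro i
    by_cases hik : i = k
    · subst hik
      simp [if_neg hkj]
    · by_cases hij : i = j
      · subst hij; simp [hik]
      · simp [hik, hij, hq1]
  simp only [hfac]
  rw [Finset.prod_mul_distrib]
  simp [Finset.prod_ite_eq']

lemma second_moment {α : Type*} [Fintype α] {n : ℕ} (q : α → ℝ) (hq1 : ∑ s, q s = 1)
    (h : α → ℝ) (hmean : ∑ s, q s * h s = 0) :
    ∑ y : Fin n → α, (∏ i, q (y i)) * (∑ k, h (y k))^2 = n * ∑ s, q s * (h s)^2 := by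
  have expand : ∀ y : Fin n → α, (∏ i, q (y i)) * (∑ k, h (y k))^2
      = ∑ k, ∑ j, (∏ i, q (y i)) * (h (y k) * h (y j)) := by
    intro y
    rw [sq, Finset.sum_mul_sum]
    rw [Finset.mul_sum]
    refine Finset.sum_congr rfl fun k _ => ?_
    rw [Finset.mul_sum]
  simp only [expand]
  rw [Finset.sum_comm]
  have inner : ∀ k : Fin n, ∑ j, ∑ y : Fin n → α, (∏ i, q (y i)) * (h (y k) * h (y j))
      = ∑ s, q s * (h s)^2 := by
    intro k
    have step : ∀ j : Fin n, ∑ y : Fin n → α, (∏ i, q (y i)) * (h (y k) * h (y j))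
        = if j = k then ∑ s, q s * (h s)^2 else 0 := by
      intro j
      by_cases hjk : j = k
      · subst hjk
        rw [if_pos rfl]
        have := exp_one_point q hq1 j (fun s => h s * h s)
        simpa [sq] using this
      · rw [if_neg hjk]
        have := exp_two_point q hq1 (Ne.symm hjk) h h
        rw [this, hmean, zero_mul]
    simp only [step]
    simp
  have swap : ∀ k : Fin n, ∑ y : Fin n → α, ∑ j, (∏ i, q (y i)) * (h (y k) * h (y j))
      = ∑ j, ∑ y : Fin n → α, (∏ i, q (y i)) * (h (y k) * h (y j)) := by
    intro k; rw [Finset.sum_comm]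
  calc ∑ k : Fin n, ∑ y : Fin n → α, ∑ j, (∏ i, q (y i)) * (h (y k) * h (y j))
      = ∑ k : Fin n, ∑ s, q s * (h s)^2 := by
        refine Finset.sum_congr rfl fun k _ => ?_
        rw [swap k, inner k]
    _ = n * ∑ s, q s * (h s)^2 := by
        rw [Finset.sum_const, Finset.card_univ, Fintype.card_fin, nsmul_eq_mul]

lemma fiber_mass {U S : Type*} [Fintype U] [Fintype S] (p : U → ℝ) (c : U → S)
    {n : ℕ} (y : Fin n → S) :
    ∑ x ∈ Finset.univ.filter (fun x : Fin n → U => (fun k => c (x k)) = y),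
      ∏ k, p (x k) = ∏ k, Pclass p c (y k) := by
  rw [Finset.sum_filter]
  have key : ∀ x : Fin n → U,
      (if (fun k => c (x k)) = y then ∏ k, p (x k) else 0)
      = ∏ k, (if c (x k) = y k then p (x k) else 0) := by
    intro x
    by_cases hxy : (fun k => c (x k)) = y
    · rw [if_pos hxy]
      refine (Finset.prod_congr rfl fun k _ => ?_).symm
      rw [if_pos (congrFun hxy k)]
    · rw [if_neg hxy]
      obtain ⟨k, hk⟩ : ∃ k, c (x k) ≠ y k := by
        by_contra hcon
        push_neg at hcon
        exact hxy (funext hcon)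
      exact (Finset.prod_eq_zero (f := fun k => if c (x k) = y k then p (x k) else 0)
        (Finset.mem_univ k) (if_neg hk)).symm
  simp only [key]
  rw [sum_prod_eq_prod_sum (fun k u => if c u = y k then p u else 0)]
  rfl

/-- Semantic source coding theorem, direct part: Let `p` be a pmf on a finite
set `U` and let a partition of `U` be encoded by a surjective class-index map `c : U → S`.
For every rate `R > H_s(Ũ)` and every `ε > 0`, for all sufficiently large `n` there exist a
message set `Fin m` with `m ≤ 2^{nR}`, an encoder `φ : U^n → Fin m` and a decoder
`ψ : Fin m → U^n` such that, for i.i.d. `U_1,…,U_n ~ p`, the probability that the decoded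
sequence differs from the source sequence in some semantic symbol is less than `ε`. -/
theorem semantic_source_coding_direct
    {U S : Type*} [Fintype U] [Fintype S]
    (p : U → ℝ) (hp0 : ∀ u, 0 ≤ p u) (hp1 : ∑ u : U, p u = 1)
    (c : U → S) (hc : Function.Surjective c)
    (R : ℝ) (hR : semEntropy p c < R) (ε : ℝ) (hε : 0 < ε) :
    ∃ N : ℕ, ∀ n ≥ N,
      ∃ (m : ℕ) (φ : (Fin n → U) → Fin m) (ψ : Fin m → Fin n → U),
        (m : ℝ) ≤ 2 ^ ((n : ℝ) * R) ∧
        (∑ x ∈ Finset.univ.filter (fun x : Fin n → U =>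
              ∃ k : Fin n, c (ψ (φ x) k) ≠ c (x k)),
            ∏ k : Fin n, p (x k)) < ε := by
  classical
  have hUne : Nonempty U := by
    by_contra hcon
    rw [not_nonempty_iff] at hcon
    rw [Finset.univ_eq_empty, Finset.sum_empty] at hp1
    norm_num at hp1
  set q : S → ℝ := Pclass p c with hq_def
  have hq0 : ∀ s, 0 ≤ q s := fun s =>
    Finset.sum_nonneg (fun u _ => by split_ifs; exacts [hp0 u, le_refl 0])
  have hq1 : ∑ s, q s = 1 := by
    rw [← hp1]
    show (∑ s : S, Pclass p c s) = ∑ u : U, p u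
    unfold Pclass
    rw [Finset.sum_comm]
    refine Finset.sum_congr rfl fun u _ => ?_
    simp
  set μ : ℝ := semEntropy p c with hμ_def
  have hq_le1 : ∀ s, q s ≤ 1 := by
    intro s
    rw [← hq1]
    exact Finset.single_le_sum (fun t _ => hq0 t) (Finset.mem_univ s)
  have hμ0 : 0 ≤ μ := by
    rw [hμ_def, semEntropy, neg_nonneg]
    refine Finset.sum_nonpos fun s _ => ?_
    exact mul_nonpos_of_nonneg_of_nonpos (hq0 s)
      (Real.logb_nonpos one_lt_two (hq0 s) (hq_le1 s))
  set g : S → ℝ := fun s => -Real.logb 2 (q s) with hg_def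
  set h : S → ℝ := fun s => g s - μ with hh_def
  have hmean_g : ∑ s, q s * g s = μ := by
    rw [hμ_def, semEntropy, ← Finset.sum_neg_distrib]
    refine Finset.sum_congr rfl fun s _ => ?_
    simp [hg_def, mul_neg, hq_def]
  have hmean : ∑ s, q s * h s = 0 := by
    simp only [hh_def, mul_sub, Finset.sum_sub_distrib, hmean_g]
    rw [← Finset.sum_mul, hq1, one_mul, sub_self]
  set V : ℝ := ∑ s, q s * (h s)^2 with hV_def
  have hV0 : 0 ≤ V :=
    Finset.sum_nonneg fun s _ => mul_nonneg (hq0 s) (sq_nonneg _)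
  set δ : ℝ := (R - μ)/2 with hδ_def
  have hδ : 0 < δ := by rw [hδ_def]; linarith
  set R' : ℝ := μ + δ with hR'_def
  have hR'pos : 0 < R' := by rw [hR'_def]; linarith
  obtain ⟨N, hN⟩ := exists_nat_gt (max (1/δ) (V/(ε*δ^2)))
  refine ⟨N, fun n hn => ?_⟩
  have hnN : (N:ℝ) ≤ n := Nat.cast_le.2 hn
  have hn1 : 1/δ < (n:ℝ) := lt_of_le_of_lt (le_max_left _ _) (lt_of_lt_of_le hN hnN)
  have hn2 : V/(ε*δ^2) < (n:ℝ) := lt_of_le_of_lt (le_max_right _ _) (lt_of_lt_of_le hN hnN)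
  have hnpos : 0 < (n:ℝ) := lt_trans (by positivity) hn1
  have hnδ1 : 1 < (n:ℝ)*δ := by
    rw [div_lt_iff₀ hδ] at hn1
    linarith
  -- the typical set
  set W : (Fin n → S) → ℝ := fun y => ∏ k, q (y k) with hW_def
  have hW0 : ∀ y, 0 ≤ W y := fun y => Finset.prod_nonneg fun k _ => hq0 _
  have hWsum : ∑ y, W y = 1 := by
    rw [hW_def]
    rw [sum_prod_eq_prod_sum (fun _ s => q s)]
    simp [hq1]
  set A : Finset (Fin n → S) :=
    Finset.univ.filter (fun y => (2:ℝ) ^ (-((n:ℝ) * R')) ≤ W y) with hA_def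
  -- cardinality bound
  have hApow : (0:ℝ) < (2:ℝ) ^ ((n:ℝ) * R') := Real.rpow_pos_of_pos two_pos _
  have hcard : (A.card : ℝ) ≤ (2:ℝ) ^ ((n:ℝ) * R') := by
    have h1 : (A.card : ℝ) * (2:ℝ) ^ (-((n:ℝ) * R')) ≤ ∑ y ∈ A, W y := by
      simpa [nsmul_eq_mul] using
        Finset.card_nsmul_le_sum A W ((2:ℝ) ^ (-((n:ℝ) * R')))
          (fun y hy => (Finset.mem_filter.1 hy).2)
    have h2 : ∑ y ∈ A, W y ≤ 1 := by
      rw [← hWsum]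
      exact Finset.sum_le_sum_of_subset_of_nonneg (Finset.subset_univ A)
        (fun y _ _ => hW0 y)
    rw [Real.rpow_neg (by norm_num : (0:ℝ) ≤ 2)] at h1
    calc (A.card : ℝ) = ((A.card : ℝ) * ((2:ℝ) ^ ((n:ℝ) * R'))⁻¹) * (2:ℝ) ^ ((n:ℝ) * R') := by
          field_simp
      _ ≤ 1 * (2:ℝ) ^ ((n:ℝ) * R') :=
          mul_le_mul_of_nonneg_right (h1.trans h2) hApow.le
      _ = (2:ℝ) ^ ((n:ℝ) * R') := one_mul _
  -- representative map
  set r : S → U := Function.surjInv hc with hr_def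
  have hr : ∀ s, c (r s) = s := fun s => Function.surjInv_eq hc s
  refine ⟨A.card + 1,
    (fun x => if hx : (fun k => c (x k)) ∈ A then Fin.castSucc (A.equivFin ⟨_, hx⟩)
      else Fin.last A.card),
    (fun i k => if hi : (i : ℕ) < A.card
      then r ((A.equivFin.symm ⟨(i:ℕ), hi⟩ : {y // y ∈ A}).1 k)
      else Classical.arbitrary U),
    ?_, ?_⟩
  · -- cardinality bound
    push_cast
    have hsplit : (n:ℝ) * R = (n:ℝ) * R' + (n:ℝ) * δ := by
      rw [hR'_def, hδ_def]; ring
    rw [hsplit, Real.rpow_add two_pos]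
    have h2δ : (2:ℝ) ≤ (2:ℝ) ^ ((n:ℝ) * δ) := by
      calc (2:ℝ) = (2:ℝ) ^ (1:ℝ) := (Real.rpow_one 2).symm
        _ ≤ (2:ℝ) ^ ((n:ℝ) * δ) :=
          Real.rpow_le_rpow_of_exponent_le one_le_two hnδ1.le
    have h1R' : (1:ℝ) ≤ (2:ℝ) ^ ((n:ℝ) * R') := by
      rw [show (1:ℝ) = (2:ℝ) ^ (0:ℝ) from (Real.rpow_zero 2).symm]
      exact Real.rpow_le_rpow_of_exponent_le one_le_two (by positivity)
    nlinarith [hApow]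
  · -- error probability bound
    have hgood : ∀ x : Fin n → U, (fun k => c (x k)) ∈ A →
        ∀ k, c ((fun i k => if hi : (i : ℕ) < A.card
          then r ((A.equivFin.symm ⟨(i:ℕ), hi⟩ : {y // y ∈ A}).1 k)
          else Classical.arbitrary U)
          ((fun x => if hx : (fun k => c (x k)) ∈ A then Fin.castSucc (A.equivFin ⟨_, hx⟩)
            else Fin.last A.card) x) k) = c (x k) := by
      intro x hx k
      simp only [dif_pos hx]
      set j := A.equivFin ⟨_, hx⟩ with hj_def
      have hlt : ((Fin.castSucc j : Fin (A.card+1)) : ℕ) < A.card := by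
        simpa using j.isLt
      rw [dif_pos hlt]
      have hjj : (⟨((Fin.castSucc j : Fin (A.card+1)) : ℕ), hlt⟩ : Fin A.card) = j := by
        apply Fin.ext; simp
      rw [hjj, hj_def, Equiv.symm_apply_apply]
      exact hr _
    -- error set is contained in the atypical set
    have hsub : (Finset.univ.filter (fun x : Fin n → U =>
        ∃ k : Fin n, c ((fun i k => if hi : (i : ℕ) < A.card
          then r ((A.equivFin.symm ⟨(i:ℕ), hi⟩ : {y // y ∈ A}).1 k)
          else Classical.arbitrary U)
          ((fun x => if hx : (fun k => c (x k)) ∈ A then Fin.castSucc (A.equivFin ⟨_, hx⟩)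
            else Fin.last A.card) x) k) ≠ c (x k)))
        ⊆ Finset.univ.filter (fun x : Fin n → U => (fun k => c (x k)) ∉ A) := by
      intro x hx
      rw [Finset.mem_filter] at hx ⊢
      obtain ⟨-, k, hk⟩ := hx
      refine ⟨Finset.mem_univ x, fun hA' => hk (hgood x hA' k)⟩
    have hstep1 : (∑ x ∈ Finset.univ.filter (fun x : Fin n → U =>
        ∃ k : Fin n, c ((fun i k => if hi : (i : ℕ) < A.card
          then r ((A.equivFin.symm ⟨(i:ℕ), hi⟩ : {y // y ∈ A}).1 k)
          else Classical.arbitrary U)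
          ((fun x => if hx : (fun k => c (x k)) ∈ A then Fin.castSucc (A.equivFin ⟨_, hx⟩)
            else Fin.last A.card) x) k) ≠ c (x k)),
        ∏ k : Fin n, p (x k))
        ≤ ∑ x ∈ Finset.univ.filter (fun x : Fin n → U => (fun k => c (x k)) ∉ A),
          ∏ k : Fin n, p (x k) :=
      Finset.sum_le_sum_of_subset_of_nonneg hsub
        (fun x _ _ => Finset.prod_nonneg fun k _ => hp0 _)
    -- group by semantic sequence
    have hstep2 : (∑ x ∈ Finset.univ.filter (fun x : Fin n → U => (fun k => c (x k)) ∉ A),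
        ∏ k : Fin n, p (x k)) = ∑ y : Fin n → S, (if y ∉ A then W y else 0) := by
      rw [Finset.sum_filter]
      rw [← Finset.sum_fiberwise Finset.univ (fun x : Fin n → U => (fun k => c (x k)))
        (fun x => if (fun k => c (x k)) ∉ A then ∏ k, p (x k) else 0)]
      refine Finset.sum_congr rfl fun y _ => ?_
      by_cases hyA : y ∈ A
      · rw [if_neg (by simpa using hyA)]
        refine Finset.sum_eq_zero fun x hx => ?_
        rw [Finset.mem_filter] at hx
        rw [hx.2, if_neg (by simpa using hyA)]
      · rw [if_pos hyA]
        simp only [hW_def, hq_def]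
        rw [← fiber_mass p c y]
        refine Finset.sum_congr rfl fun x hx => ?_
        rw [Finset.mem_filter] at hx
        rw [hx.2, if_pos hyA]
    -- Chebyshev bound
    have hC : (0:ℝ) < ((n:ℝ)*δ)^2 := by positivity
    have cheb : ∀ y : Fin n → S, y ∉ A →
        W y ≤ W y * ((∑ k, h (y k))^2 / ((n:ℝ)*δ)^2) := by
      intro y hyA
      rcases eq_or_lt_of_le (hW0 y) with h0 | hpos
      · rw [← h0, zero_mul]
      · have hqk : ∀ k, 0 < q (y k) := by
          intro k
          rcases eq_or_lt_of_le (hq0 (y k)) with h0' | hpos'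
          · exfalso
            have : W y = 0 :=
              Finset.prod_eq_zero (Finset.mem_univ k) h0'.symm
            rw [this] at hpos; exact lt_irrefl 0 hpos
          · exact hpos'
        have hylt : W y < (2:ℝ) ^ (-((n:ℝ) * R')) := by
          rw [hA_def] at hyA
          simp only [Finset.mem_filter, Finset.mem_univ, true_and, not_le] at hyA
          exact hyA
        have hlog : Real.logb 2 (W y) = ∑ k, Real.logb 2 (q (y k)) := by
          rw [hW_def]
          simp only [Real.logb, Real.log_prod (fun k _ => (hqk k).ne'), Finset.sum_div]
        have hlog_lt : Real.logb 2 (W y) < -((n:ℝ) * R') := by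
          calc Real.logb 2 (W y) < Real.logb 2 ((2:ℝ) ^ (-((n:ℝ) * R'))) :=
                Real.logb_lt_logb one_lt_two hpos hylt
            _ = -((n:ℝ) * R') := Real.logb_rpow two_pos (by norm_num)
        have hsumh : (n:ℝ)*δ < ∑ k, h (y k) := by
          have : ∑ k, h (y k) = -(∑ k, Real.logb 2 (q (y k))) - (n:ℝ)*μ := by
            simp only [hh_def, hg_def, Finset.sum_sub_distrib, Finset.sum_neg_distrib,
              Finset.sum_const, Finset.card_univ, Fintype.card_fin, nsmul_eq_mul]
          rw [this, ← hlog]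
          rw [hR'_def] at hlog_lt
          have : (n:ℝ) * (μ + δ) = (n:ℝ)*μ + (n:ℝ)*δ := by ring
          linarith [hlog_lt, this ▸ hlog_lt]
        have hnδpos : (0:ℝ) < (n:ℝ)*δ := by positivity
        have hsq : ((n:ℝ)*δ)^2 ≤ (∑ k, h (y k))^2 :=
          pow_le_pow_left₀ hnδpos.le hsumh.le 2
        have h1le : (1:ℝ) ≤ (∑ k, h (y k))^2 / ((n:ℝ)*δ)^2 :=
          (one_le_div hC).2 hsq
        exact le_mul_of_one_le_right (hW0 y) h1le
    have hstep3 : (∑ y : Fin n → S, (if y ∉ A then W y else 0))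
        ≤ (∑ y : Fin n → S, W y * (∑ k, h (y k))^2) / ((n:ℝ)*δ)^2 := by
      rw [Finset.sum_div]
      refine Finset.sum_le_sum fun y _ => ?_
      by_cases hyA : y ∈ A
      · rw [if_neg (by simpa using hyA)]
        exact div_nonneg (mul_nonneg (hW0 y) (sq_nonneg _)) hC.le
      · rw [if_pos hyA]
        calc W y ≤ W y * ((∑ k, h (y k))^2 / ((n:ℝ)*δ)^2) := cheb y hyA
          _ = W y * (∑ k, h (y k))^2 / ((n:ℝ)*δ)^2 := by ring
    have hsm : ∑ y : Fin n → S, W y * (∑ k, h (y k))^2 = n * V := by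
      simp only [hW_def, hV_def]
      exact second_moment q hq1 h hmean
    have hfinal : ((n:ℝ) * V) / ((n:ℝ)*δ)^2 < ε := by
      rw [div_lt_iff₀ hC]
      rw [div_lt_iff₀ (by positivity : (0:ℝ) < ε*δ^2)] at hn2
      nlinarith
    calc (∑ x ∈ Finset.univ.filter (fun x : Fin n → U =>
          ∃ k : Fin n, c ((fun i k => if hi : (i : ℕ) < A.card
            then r ((A.equivFin.symm ⟨(i:ℕ), hi⟩ : {y // y ∈ A}).1 k)
            else Classical.arbitrary U)
            ((fun x => if hx : (fun k => c (x k)) ∈ A then Fin.castSucc (A.equivFin ⟨_, hx⟩)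
              else Fin.last A.card) x) k) ≠ c (x k)),
          ∏ k : Fin n, p (x k))
        ≤ ∑ y : Fin n → S, (if y ∉ A then W y else 0) := hstep2 ▸ hstep1
      _ ≤ (∑ y : Fin n → S, W y * (∑ k, h (y k))^2) / ((n:ℝ)*δ)^2 := hstep3
      _ = ((n:ℝ) * V) / ((n:ℝ)*δ)^2 := by rw [hsm]
      _ < ε := hfinal
end

section
/- (Semantic source coding theorem, converse part) Let U be a finite set, p a probability mass function on U, and {U_s : s ∈ S} a partition of U with semantic entropy H_s(Ũ); write s(u) for the class index of u. If R < H_s(Ũ), then for any sequence of codes consisting of encoders φ_n : U^n → M_n with |M_n| ≤ 2^{nR} and decoders ψ_n : M_n → U^n, the error probability P_e^(n) = Pr( ∃k ≤ n, s(ψ_n(φ_n(U_1,...,U_n))_k) ≠ s(U_k) ) tends to 1 as n → ∞, where U_1,...,U_n are i.i.d. with distribution p. -/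
open Finset
open scoped Classical

section Aux
set_option linter.unusedSectionVars false
variable {S : Type*} [Fintype S]

lemma scc_one {n : ℕ} (q f : S → ℝ) (hq1 : ∑ s, q s = 1) (j : Fin n) :
    ∑ t : Fin n → S, (∏ k, q (t k)) * f (t j) = ∑ s, q s * f s := by
  have h : ∀ t : Fin n → S, (∏ k, q (t k)) * f (t j)
      = ∏ k, (q (t k) * if k = j then f (t k) else 1) := by
    intro t
    rw [Finset.prod_mul_distrib]
    simp
  simp_rw [h]
  rw [← Fintype.prod_sum (fun (k : Fin n) (s : S) => q s * if k = j then f s else 1)]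
  have h2 : ∀ k : Fin n, (∑ s, q s * if k = j then f s else 1)
      = if k = j then ∑ s, q s * f s else 1 := by
    intro k; by_cases hk : k = j <;> simp [hk, hq1]
  simp_rw [h2]
  simp

lemma scc_two {n : ℕ} (q f : S → ℝ) (hq1 : ∑ s, q s = 1) {j l : Fin n} (hjl : j ≠ l) :
    ∑ t : Fin n → S, (∏ k, q (t k)) * (f (t j) * f (t l))
      = (∑ s, q s * f s) * (∑ s, q s * f s) := by
  have h : ∀ t : Fin n → S, (∏ k, q (t k)) * (f (t j) * f (t l))
      = ∏ k, (q (t k) * ((if k = j then f (t k) else 1) * (if k = l then f (t k) else 1))) := by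
    intro t
    rw [Finset.prod_mul_distrib, Finset.prod_mul_distrib]
    simp
  simp_rw [h]
  rw [← Fintype.prod_sum
    (fun (k : Fin n) (s : S) => q s * ((if k = j then f s else 1) * (if k = l then f s else 1)))]
  have h2 : ∀ k : Fin n, (∑ s, q s * ((if k = j then f s else 1) * (if k = l then f s else 1)))
      = (if k = j then ∑ s, q s * f s else 1) * (if k = l then ∑ s, q s * f s else 1) := by
    intro k
    rcases eq_or_ne k j with rfl | hkj
    · simp [hjl, hq1]
    · rcases eq_or_ne k l with rfl | hkl
      · simp [hkj, hq1]
      · simp [hkj, hkl, hq1]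
  simp_rw [h2]
  rw [Finset.prod_mul_distrib]
  simp

lemma scc_fiber {U : Type*} [Fintype U] (p : U → ℝ) (c : U → S) {n : ℕ} (t : Fin n → S) :
    ∑ x : Fin n → U, (if ∀ k, c (x k) = t k then ∏ k, p (x k) else 0)
      = ∏ k, Pclass p c (t k) := by
  have h : ∀ x : Fin n → U, (if ∀ k, c (x k) = t k then ∏ k, p (x k) else 0)
      = ∏ k, (if c (x k) = t k then p (x k) else 0) := by
    intro x
    by_cases hx : ∀ k, c (x k) = t k
    · simp [hx]
    · rw [if_neg hx]
      push_neg at hx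
      obtain ⟨k, hk⟩ := hx
      refine (Finset.prod_eq_zero (Finset.mem_univ k) ?_).symm
      exact if_neg hk
  simp_rw [h]
  rw [← Fintype.prod_sum (fun (k : Fin n) (u : U) => if c u = t k then p u else 0)]
  rfl

lemma scc_tot {U : Type*} [Fintype U] (p : U → ℝ) (hp1 : ∑ u : U, p u = 1) (n : ℕ) :
    ∑ x : Fin n → U, ∏ k, p (x k) = 1 := by
  rw [← Fintype.prod_sum (fun (_ : Fin n) (u : U) => p u)]
  simp [hp1]

end Aux

/-- Semantic source coding theorem, converse part: Let `p` be a pmf on a finite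
set `U` and let a partition of `U` be encoded by a surjective class-index map `c : U → S`.
If `R < H_s(Ũ)`, then for any sequence of codes with message sets `Fin (m n)`,
`m n ≤ 2^{nR}`, encoders `φ n : U^n → Fin (m n)` and decoders `ψ n : Fin (m n) → U^n`,
the error probability
`P_e^(n) = Pr(∃ k ≤ n, s(ψ_n(φ_n(U_1,…,U_n))_k) ≠ s(U_k))` tends to `1` as `n → ∞`,
where `U_1,…,U_n` are i.i.d. with distribution `p`. -/
theorem semantic_source_coding_converse
    {U S : Type*} [Fintype U] [Fintype S]
    (p : U → ℝ) (hp0 : ∀ u, 0 ≤ p u) (hp1 : ∑ u : U, p u = 1)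
    (c : U → S) (hc : Function.Surjective c)
    (R : ℝ) (hR : R < semEntropy p c)
    (m : ℕ → ℕ) (hm : ∀ n, (m n : ℝ) ≤ 2 ^ ((n : ℝ) * R))
    (φ : ∀ n, (Fin n → U) → Fin (m n)) (ψ : ∀ n, Fin (m n) → Fin n → U) :
    Filter.Tendsto
      (fun n : ℕ =>
        ∑ x ∈ Finset.univ.filter (fun x : Fin n → U =>
            ∃ k : Fin n, c (ψ n (φ n x) k) ≠ c (x k)),
          ∏ k : Fin n, p (x k))
      Filter.atTop (nhds 1) := by
  -- Notation
  set q : S → ℝ := Pclass p c with hqdef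
  set H : ℝ := semEntropy p c with hHdef
  set δ : ℝ := (H - R) / 2 with hδdef
  have hδ : 0 < δ := by simp [hδdef]; linarith
  have hq0 : ∀ s, 0 ≤ q s := by
    intro s
    exact Finset.sum_nonneg fun u _ => by by_cases h : c u = s <;> simp [h, hp0 u]
  have hq1 : ∑ s, q s = 1 := by
    simp only [hqdef, Pclass]
    rw [Finset.sum_comm]
    simp [hp1]
  set g : S → ℝ := fun s => if q s = 0 then 0 else -Real.logb 2 (q s) with hgdef
  have hgH : ∑ s, q s * g s = H := by
    rw [hHdef, semEntropy, ← Finset.sum_neg_distrib]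
    refine Finset.sum_congr rfl fun s _ => ?_
    by_cases h : q s = 0
    · simp only [hgdef]
      rw [if_pos h]
      simp [hqdef] at h ⊢
      simp [h]
    · simp only [hgdef]
      rw [if_neg h]
      ring
  have hd0 : ∑ s, q s * (g s - H) = 0 := by
    simp_rw [mul_sub]
    rw [Finset.sum_sub_distrib, hgH, ← Finset.sum_mul, hq1]
    ring
  set E₂ : ℝ := ∑ s, q s * ((g s - H) * (g s - H)) with hE2def
  -- probability of success
  set Psucc : ℕ → ℝ := fun n =>
    ∑ x ∈ Finset.univ.filter (fun x : Fin n → U => ∀ k, c (ψ n (φ n x) k) = c (x k)),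
      ∏ k, p (x k) with hPdef
  have hkey : ∀ n : ℕ,
      (∑ x ∈ Finset.univ.filter (fun x : Fin n → U =>
          ∃ k : Fin n, c (ψ n (φ n x) k) ≠ c (x k)), ∏ k : Fin n, p (x k))
        = 1 - Psucc n := by
    intro n
    have htot := scc_tot p hp1 n
    have hsplit := Finset.sum_filter_add_sum_filter_not Finset.univ
      (fun x : Fin n → U => ∀ k, c (ψ n (φ n x) k) = c (x k)) (fun x => ∏ k, p (x k))
    have heq : Finset.univ.filter (fun x : Fin n → U => ∃ k, c (ψ n (φ n x) k) ≠ c (x k))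
        = Finset.univ.filter (fun x : Fin n → U => ¬ ∀ k, c (ψ n (φ n x) k) = c (x k)) := by
      apply Finset.filter_congr
      intro x _
      simp [not_forall]
    rw [heq]
    rw [htot] at hsplit
    simp only [hPdef]
    linarith
  -- main bound
  have hbound : ∀ n : ℕ, 1 ≤ n →
      Psucc n ≤ E₂ / ((n : ℝ) * δ ^ 2) + (2 : ℝ) ^ (-(n : ℝ) * δ) := by
    intro n hn
    have hn0 : (0 : ℝ) < (n : ℝ) := by exact_mod_cast hn
    set w : (Fin n → S) → ℝ := fun t => ∏ k, q (t k) with hwdef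
    have hw0 : ∀ t, 0 ≤ w t := fun t => Finset.prod_nonneg fun k _ => hq0 _
    set X : (Fin n → S) → ℝ := fun t => ∑ k, g (t k) with hXdef
    set T : Finset (Fin n → S) :=
      Finset.univ.image (fun y : Fin (m n) => fun k => c (ψ n y k)) with hTdef
    have hTcard : (T.card : ℝ) ≤ (m n : ℝ) := by
      have := Finset.card_image_le (s := (Finset.univ : Finset (Fin (m n))))
        (f := fun y : Fin (m n) => fun k => c (ψ n y k))
      simp at this
      exact_mod_cast this
    -- step 1 : Psucc n ≤ ∑ t in T, w t
    have hstep1 : Psucc n ≤ ∑ t ∈ T, w t := by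
      have hmaps : ∀ x ∈ Finset.univ.filter
          (fun x : Fin n → U => ∀ k, c (ψ n (φ n x) k) = c (x k)),
          (fun k => c (x k)) ∈ T := by
        intro x hx
        simp only [Finset.mem_filter, Finset.mem_univ, true_and] at hx
        simp only [hTdef, Finset.mem_image, Finset.mem_univ, true_and]
        exact ⟨φ n x, by funext k; exact hx k⟩
      simp only [hPdef]
      rw [← Finset.sum_fiberwise_of_maps_to hmaps (fun x => ∏ k, p (x k))]
      refine Finset.sum_le_sum fun t ht => ?_
      have hfib := scc_fiber p c t
      calc ∑ x ∈ (Finset.univ.filter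
            (fun x : Fin n → U => ∀ k, c (ψ n (φ n x) k) = c (x k))).filter
              (fun x => (fun k => c (x k)) = t), ∏ k, p (x k)
          ≤ ∑ x ∈ Finset.univ.filter (fun x : Fin n → U => ∀ k, c (x k) = t k),
              ∏ k, p (x k) := by
            refine Finset.sum_le_sum_of_subset_of_nonneg ?_
              (fun x _ _ => Finset.prod_nonneg fun k _ => hp0 _)
            intro x hx
            simp only [Finset.mem_filter, Finset.mem_univ, true_and] at hx ⊢
            intro k
            exact congrFun hx.2 k
        _ = w t := by
            rw [Finset.sum_filter]
            exact hfib
    -- Chebyshev part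
    have hA : (∑ t : Fin n → S, w t * (X t - n * H) ^ 2) = n * E₂ := by
      have hXd : ∀ t : Fin n → S, X t - n * H = ∑ k, (g (t k) - H) := by
        intro t
        rw [Finset.sum_sub_distrib, Finset.sum_const]
        simp [hXdef]
      have h1 : ∀ t : Fin n → S, w t * (X t - n * H) ^ 2
          = ∑ j : Fin n, ∑ l : Fin n, w t * ((g (t j) - H) * (g (t l) - H)) := by
        intro t
        rw [hXd t, sq, Finset.sum_mul_sum, Finset.mul_sum]
        refine Finset.sum_congr rfl fun j _ => ?_
        rw [Finset.mul_sum]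
      simp_rw [h1]
      rw [Finset.sum_comm]
      have h2 : ∀ j l : Fin n,
          (∑ t : Fin n → S, w t * ((g (t j) - H) * (g (t l) - H)))
            = if j = l then E₂ else 0 := by
        intro j l
        rcases eq_or_ne j l with rfl | hjl
        · rw [if_pos rfl]
          exact scc_one q (fun s => (g s - H) * (g s - H)) hq1 j
        · rw [if_neg hjl, scc_two q (fun s => g s - H) hq1 hjl, hd0, mul_zero]
      have h3 : ∀ j : Fin n, (∑ l : Fin n, ∑ t : Fin n → S,
          w t * ((g (t j) - H) * (g (t l) - H))) = E₂ := by
        intro j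
        have : ∀ l : Fin n, (∑ t : Fin n → S, w t * ((g (t j) - H) * (g (t l) - H)))
            = if j = l then E₂ else 0 := fun l => h2 j l
        simp_rw [this]
        simp
      calc (∑ j : Fin n, ∑ t : Fin n → S, ∑ l : Fin n,
            w t * ((g (t j) - H) * (g (t l) - H)))
          = ∑ j : Fin n, ∑ l : Fin n, ∑ t : Fin n → S,
            w t * ((g (t j) - H) * (g (t l) - H)) := by
            refine Finset.sum_congr rfl fun j _ => Finset.sum_comm
        _ = ∑ j : Fin n, E₂ := Finset.sum_congr rfl fun j _ => h3 j
        _ = n * E₂ := by simp [mul_comm]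
    have hcheb : ∑ t ∈ Finset.univ.filter (fun t : Fin n → S => X t < n * (H - δ)), w t
        ≤ E₂ / ((n : ℝ) * δ ^ 2) := by
      have hb : ∀ t ∈ Finset.univ.filter (fun t : Fin n → S => X t < n * (H - δ)),
          ((n : ℝ) * δ) ^ 2 * w t ≤ w t * (X t - n * H) ^ 2 := by
        intro t ht
        simp only [Finset.mem_filter, Finset.mem_univ, true_and] at ht
        have h0 : 0 ≤ (n : ℝ) * δ := by positivity
        have h2 : (n : ℝ) * δ ≤ n * H - X t := by nlinarith
        have h1 : ((n : ℝ) * δ) ^ 2 ≤ (X t - n * H) ^ 2 := by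
          calc ((n : ℝ) * δ) ^ 2 ≤ (n * H - X t) ^ 2 := by nlinarith
            _ = (X t - n * H) ^ 2 := by ring
        nlinarith [hw0 t]
      have hsum : ((n : ℝ) * δ) ^ 2 *
          (∑ t ∈ Finset.univ.filter (fun t : Fin n → S => X t < n * (H - δ)), w t)
          ≤ n * E₂ := by
        rw [Finset.mul_sum]
        refine le_trans (Finset.sum_le_sum hb) (le_trans ?_ hA.le)
        refine Finset.sum_le_sum_of_subset_of_nonneg (Finset.filter_subset _ _)
          (fun t _ _ => mul_nonneg (hw0 t) (sq_nonneg _))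
      have hnd : (0 : ℝ) < ((n : ℝ) * δ) ^ 2 := by positivity
      rw [le_div_iff₀ (by positivity : (0:ℝ) < (n : ℝ) * δ ^ 2)]
      rw [← mul_le_mul_iff_right₀ hn0]
      calc (n : ℝ) * ((∑ t ∈ Finset.univ.filter
              (fun t : Fin n → S => X t < n * (H - δ)), w t) * ((n : ℝ) * δ ^ 2))
          = ((n : ℝ) * δ) ^ 2 * (∑ t ∈ Finset.univ.filter
              (fun t : Fin n → S => X t < n * (H - δ)), w t) := by ring
        _ ≤ n * E₂ := hsum
    -- pointwise bound on good sequences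
    have hwle : ∀ t : Fin n → S, n * (H - δ) ≤ X t →
        w t ≤ (2 : ℝ) ^ (-((n : ℝ) * (H - δ))) := by
      intro t hXt
      by_cases hz : ∃ k, q (t k) = 0
      · obtain ⟨k, hk⟩ := hz
        have : w t = 0 := Finset.prod_eq_zero (Finset.mem_univ k) hk
        rw [this]
        positivity
      · push_neg at hz
        have hqpos : ∀ k, 0 < q (t k) := fun k => lt_of_le_of_ne (hq0 _) (Ne.symm (hz k))
        have hwX : w t = (2 : ℝ) ^ (-(X t)) := by
          rw [hXdef]
          simp only
          rw [← Finset.sum_neg_distrib, Real.rpow_sum_of_pos two_pos]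
          refine Finset.prod_congr rfl fun k _ => ?_
          have : g (t k) = -Real.logb 2 (q (t k)) := by
            simp only [hgdef]
            rw [if_neg (hz k)]
          rw [this, neg_neg, Real.rpow_logb two_pos (by norm_num) (hqpos k)]
        rw [hwX]
        exact Real.rpow_le_rpow_left_iff (by norm_num : (1:ℝ) < 2) |>.mpr (by linarith)
    -- combine
    have hstep2 : (∑ t ∈ T, w t)
        ≤ E₂ / ((n : ℝ) * δ ^ 2) + (m n : ℝ) * (2 : ℝ) ^ (-((n : ℝ) * (H - δ))) := by
      rw [← Finset.sum_filter_add_sum_filter_not T (fun t => X t < n * (H - δ)) w]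
      gcongr ?_ + ?_
      · refine le_trans (Finset.sum_le_sum_of_subset_of_nonneg ?_ fun t _ _ => hw0 t) hcheb
        intro t ht
        simp only [Finset.mem_filter] at ht ⊢
        exact ⟨Finset.mem_univ t, ht.2⟩
      · calc ∑ t ∈ T.filter (fun t => ¬ X t < n * (H - δ)), w t
            ≤ ∑ t ∈ T.filter (fun t => ¬ X t < n * (H - δ)),
                (2 : ℝ) ^ (-((n : ℝ) * (H - δ))) := by
              refine Finset.sum_le_sum fun t ht => ?_
              simp only [Finset.mem_filter, not_lt] at ht
              exact hwle t ht.2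
          _ = (T.filter (fun t => ¬ X t < n * (H - δ))).card
                * (2 : ℝ) ^ (-((n : ℝ) * (H - δ))) := by
              rw [Finset.sum_const, nsmul_eq_mul]
          _ ≤ (m n : ℝ) * (2 : ℝ) ^ (-((n : ℝ) * (H - δ))) := by
              have hc2 : ((T.filter (fun t => ¬ X t < n * (H - δ))).card : ℝ) ≤ (m n : ℝ) := by
                refine le_trans ?_ hTcard
                exact_mod_cast Finset.card_le_card (Finset.filter_subset _ _)
              exact mul_le_mul_of_nonneg_right hc2 (by positivity)
    have hfinal : (m n : ℝ) * (2 : ℝ) ^ (-((n : ℝ) * (H - δ)))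
        ≤ (2 : ℝ) ^ (-(n : ℝ) * δ) := by
      calc (m n : ℝ) * (2 : ℝ) ^ (-((n : ℝ) * (H - δ)))
          ≤ (2 : ℝ) ^ ((n : ℝ) * R) * (2 : ℝ) ^ (-((n : ℝ) * (H - δ))) :=
            mul_le_mul_of_nonneg_right (hm n) (by positivity)
        _ = (2 : ℝ) ^ ((n : ℝ) * R + -((n : ℝ) * (H - δ))) := by
            rw [← Real.rpow_add two_pos]
        _ = (2 : ℝ) ^ (-(n : ℝ) * δ) := by
            congr 1
            have : H = R + 2 * δ := by rw [hδdef]; ring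
            rw [this]; ring
    calc Psucc n ≤ ∑ t ∈ T, w t := hstep1
      _ ≤ E₂ / ((n : ℝ) * δ ^ 2) + (m n : ℝ) * (2 : ℝ) ^ (-((n : ℝ) * (H - δ))) := hstep2
      _ ≤ E₂ / ((n : ℝ) * δ ^ 2) + (2 : ℝ) ^ (-(n : ℝ) * δ) := by linarith
  -- limit of the bound
  have hlim1 : Filter.Tendsto (fun n : ℕ => E₂ / ((n : ℝ) * δ ^ 2))
      Filter.atTop (nhds 0) := by
    have : (fun n : ℕ => E₂ / ((n : ℝ) * δ ^ 2)) = fun n : ℕ => (E₂ / δ ^ 2) / (n : ℝ) := by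
      funext n
      rw [div_div]
      ring_nf
    rw [this]
    exact tendsto_const_div_atTop_nhds_zero_nat _
  have hlim2 : Filter.Tendsto (fun n : ℕ => (2 : ℝ) ^ (-(n : ℝ) * δ))
      Filter.atTop (nhds 0) := by
    have heq : ∀ n : ℕ, (2 : ℝ) ^ (-(n : ℝ) * δ) = ((2 : ℝ) ^ (-δ)) ^ n := by
      intro n
      rw [← Real.rpow_natCast ((2 : ℝ) ^ (-δ)) n, ← Real.rpow_mul (by norm_num)]
      congr 1
      ring
    simp_rw [heq]
    refine tendsto_pow_atTop_nhds_zero_of_lt_one (by positivity) ?_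
    exact Real.rpow_lt_one_of_one_lt_of_neg one_lt_two (by linarith)
  have hlim : Filter.Tendsto (fun n : ℕ => E₂ / ((n : ℝ) * δ ^ 2) + (2 : ℝ) ^ (-(n : ℝ) * δ))
      Filter.atTop (nhds 0) := by
    simpa using hlim1.add hlim2
  have hP0 : ∀ n, 0 ≤ Psucc n := by
    intro n
    exact Finset.sum_nonneg fun x _ => Finset.prod_nonneg fun k _ => hp0 _
  have hPtend : Filter.Tendsto Psucc Filter.atTop (nhds 0) := by
    refine squeeze_zero' (Filter.Eventually.of_forall hP0) ?_ hlim
    filter_upwards [Filter.eventually_ge_atTop 1] with n hn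
    exact hbound n hn
  have := hPtend.const_sub 1
  simp only [sub_zero] at this
  refine Filter.Tendsto.congr ?_ this
  intro n
  exact (hkey n).symm
end

section
/- (Semantic channel coding theorem, converse part) Let W be a discrete memoryless channel from a finite set X to a finite set Y, and fix partitions {X_s : s ∈ S} of X and {Y_t : t ∈ T} of Y, with semantic capacity C_s = sup over input probability mass functions p of I^s(X̃;Ỹ). If R > C_s, then for any sequence of codes with message sets M_n, |M_n| ≥ 2^{nR}, encoders φ_n : M_n → X^n, and decoders ψ_n : Y^n → M_n, the average error probability (1/|M_n|) Σ_{m∈M_n} Pr( ψ_n(Y^n) ≠ m | X^n = φ_n(m) ) tends to 1 as n → ∞, where Pr(Y^n = y^n | X^n = x^n) = Π_{k=1}^n W(y_k|x_k). -/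
open Finset
open scoped Classical

/-- The semantic channel capacity `C_s = sup_p I^s(X̃;Ỹ)`, the supremum over all input pmfs
`p` of the up semantic mutual information computed from the joint distribution
`q(x,y) = p(x) W(y|x)`. -/
noncomputable def semCapacity {X Y S T : Type*} [Fintype X] [Fintype Y] [Fintype S] [Fintype T]
    (W : X → Y → ℝ) (cX : X → S) (cY : Y → T) : ℝ :=
  sSup {r : ℝ | ∃ p : X → ℝ, (∀ x, 0 ≤ p x) ∧ (∑ x : X, p x = 1) ∧
      r = upSMI (fun x y => p x * W x y) cX cY}


section ProdFact
variable {n : ℕ} {Y : Type*} [Fintype Y]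

lemma prodFact (g : Fin n → Y → ℝ) :
    ∑ y : Fin n → Y, ∏ k, g k (y k) = ∏ k, ∑ b, g k b := by
  classical
  rw [Finset.prod_univ_sum (fun _ => (univ : Finset Y)) g]
  rw [Fintype.piFinset_univ]

lemma prod_double {α β : Type*} [Fintype α] [DecidableEq α] [CommMonoid β]
    (k j : α) (hkj : k ≠ j) (a b : β) :
    (∏ l : α, (if l = k then a else if l = j then b else 1)) = a * b := by
  rw [← Finset.mul_prod_erase univ _ (mem_univ k)]
  simp only [if_pos rfl]
  congr 1
  have : ∀ l ∈ (univ : Finset α).erase k,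
      (if l = k then a else if l = j then b else 1) = (if l = j then b else 1) := by
    intro l hl
    rw [if_neg (Finset.ne_of_mem_erase hl)]
  rw [Finset.prod_congr rfl this, Finset.prod_ite_eq' _ j (fun _ => b),
    if_pos (Finset.mem_erase.2 ⟨hkj.symm, mem_univ j⟩)]

lemma margFact (w : Fin n → Y → ℝ) (hw1 : ∀ k, ∑ b, w k b = 1)
    (k0 : Fin n) (h : Y → ℝ) :
    ∑ y : Fin n → Y, (∏ k, w k (y k)) * h (y k0) = ∑ b, w k0 b * h b := by
  classical
  have step : ∀ y : Fin n → Y, (∏ k, w k (y k)) * h (y k0)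
      = ∏ k, (w k (y k) * if k = k0 then h (y k) else 1) := by
    intro y
    rw [Finset.prod_mul_distrib, Finset.prod_ite_eq' _ k0 (fun k => h (y k)),
      if_pos (mem_univ k0)]
  calc ∑ y : Fin n → Y, (∏ k, w k (y k)) * h (y k0)
      = ∑ y : Fin n → Y, ∏ k, (w k (y k) * if k = k0 then h (y k) else 1) :=
        Finset.sum_congr rfl fun y _ => step y
    _ = ∏ k, ∑ b, (w k b * if k = k0 then h b else 1) :=
        prodFact (fun k b => w k b * if k = k0 then h b else 1)
    _ = ∏ k, (if k = k0 then (∑ b, w k b * h b) else 1) := by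
        refine Finset.prod_congr rfl fun k _ => ?_
        by_cases hk : k = k0
        · simp [hk]
        · simp [hk, hw1 k]
    _ = ∑ b, w k0 b * h b := by
        rw [Finset.prod_ite_eq' _ k0 (fun k => ∑ b, w k b * h b), if_pos (mem_univ k0)]

lemma pairFact (w : Fin n → Y → ℝ) (hw1 : ∀ k, ∑ b, w k b = 1)
    (k j : Fin n) (hkj : k ≠ j) (h g : Y → ℝ) :
    ∑ y : Fin n → Y, (∏ l, w l (y l)) * (h (y k) * g (y j))
      = (∑ b, w k b * h b) * (∑ b, w j b * g b) := by
  classical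
  have e1 : ∀ y : Fin n → Y, (∏ l, if l = k then h (y l) else if l = j then g (y l) else 1)
      = h (y k) * g (y j) := by
    intro y
    rw [← prod_double k j hkj (h (y k)) (g (y j))]
    refine Finset.prod_congr rfl fun l _ => ?_
    by_cases hl : l = k
    · subst hl; simp
    · by_cases hj' : l = j
      · subst hj'; simp [hl]
      · simp [hl, hj']
  have step : ∀ y : Fin n → Y, (∏ l, w l (y l)) * (h (y k) * g (y j))
      = ∏ l, (w l (y l) * if l = k then h (y l) else if l = j then g (y l) else 1) := by
    intro y
    rw [Finset.prod_mul_distrib, e1 y]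
  calc ∑ y : Fin n → Y, (∏ l, w l (y l)) * (h (y k) * g (y j))
      = ∑ y : Fin n → Y,
          ∏ l, (w l (y l) * if l = k then h (y l) else if l = j then g (y l) else 1) :=
        Finset.sum_congr rfl fun y _ => step y
    _ = ∏ l, ∑ b, (w l b * if l = k then h b else if l = j then g b else 1) :=
        prodFact (fun l b => w l b * if l = k then h b else if l = j then g b else 1)
    _ = ∏ l, (if l = k then (∑ b, w k b * h b) else if l = j then (∑ b, w j b * g b) else 1) := by
        refine Finset.prod_congr rfl fun l _ => ?_
        by_cases hk : l = k
        · simp [hk]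
        · by_cases hj : l = j
          · simp [hk, hj, hkj.symm]
          · simp [hk, hj, hw1 l]
    _ = (∑ b, w k b * h b) * (∑ b, w j b * g b) := prod_double k j hkj _ _



lemma cheb (w : Fin n → Y → ℝ) (hw0 : ∀ k b, 0 ≤ w k b)
    (hw1 : ∀ k, ∑ b, w k b = 1) (f : Fin n → Y → ℝ) (t : ℝ) (ht : 0 < t)
    (A : Finset (Fin n → Y))
    (hA : ∀ y ∈ A, t ≤ |∑ k, (f k (y k) - (∑ b, w k b * f k b))|) :
    ∑ y ∈ A, ∏ k, w k (y k)
      ≤ (∑ k, ∑ b, w k b * (f k b - (∑ b', w k b' * f k b')) ^ 2) / t ^ 2 := by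
  classical
  set E : Fin n → ℝ := fun k => ∑ b, w k b * f k b with hE
  set d : Fin n → Y → ℝ := fun k b => f k b - E k with hd
  have hd0 : ∀ k, ∑ b, w k b * d k b = 0 := by
    intro k
    simp only [hd, mul_sub, Finset.sum_sub_distrib, ← Finset.sum_mul, hw1 k, one_mul, hE]
    ring
  have hμ0 : ∀ y : Fin n → Y, (0:ℝ) ≤ ∏ k, w k (y k) :=
    fun y => Finset.prod_nonneg fun k _ => hw0 k (y k)
  -- second moment identity
  have key : ∑ y : Fin n → Y, (∏ k, w k (y k)) * (∑ k, d k (y k)) ^ 2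
      = ∑ k, ∑ b, w k b * (d k b) ^ 2 := by
    have expand : ∀ y : Fin n → Y, (∏ k, w k (y k)) * (∑ k, d k (y k)) ^ 2
        = ∑ k, ∑ j, (∏ l, w l (y l)) * (d k (y k) * d j (y j)) := by
      intro y
      rw [sq, Finset.sum_mul_sum]
      rw [Finset.mul_sum]
      refine Finset.sum_congr rfl fun k _ => ?_
      rw [Finset.mul_sum]
    calc ∑ y : Fin n → Y, (∏ k, w k (y k)) * (∑ k, d k (y k)) ^ 2
        = ∑ y : Fin n → Y, ∑ k, ∑ j, (∏ l, w l (y l)) * (d k (y k) * d j (y j)) :=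
          Finset.sum_congr rfl fun y _ => expand y
      _ = ∑ k, ∑ j, ∑ y : Fin n → Y, (∏ l, w l (y l)) * (d k (y k) * d j (y j)) := by
          rw [Finset.sum_comm]
          refine Finset.sum_congr rfl fun k _ => Finset.sum_comm
      _ = ∑ k, ∑ j, (if k = j then ∑ b, w k b * (d k b) ^ 2 else 0) := by
          refine Finset.sum_congr rfl fun k _ => Finset.sum_congr rfl fun j _ => ?_
          by_cases hkj : k = j
          · subst hkj
            rw [if_pos rfl]
            have := margFact w hw1 k (fun b => d k b * d k b)
            simpa [sq] using this
          · rw [if_neg hkj, pairFact w hw1 k j hkj (d k) (d j), hd0 k, zero_mul]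
      _ = ∑ k, ∑ b, w k b * (d k b) ^ 2 := by
          refine Finset.sum_congr rfl fun k _ => ?_
          rw [Finset.sum_ite_eq univ k (fun j => ∑ b, w k b * (d k b)^2), if_pos (mem_univ k)]
  -- Markov step
  have step1 : ∑ y ∈ A, ∏ k, w k (y k)
      ≤ ∑ y ∈ A, (∏ k, w k (y k)) * (∑ k, d k (y k)) ^ 2 / t ^ 2 := by
    refine Finset.sum_le_sum fun y hy => ?_
    have h1 : t ^ 2 ≤ (∑ k, d k (y k)) ^ 2 := by
      have := hA y hy
      have habs : t ≤ |∑ k, d k (y k)| := by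
        simpa [hd, Finset.sum_sub_distrib] using this
      calc t ^ 2 ≤ |∑ k, d k (y k)| ^ 2 := by
            apply pow_le_pow_left₀ (le_of_lt ht) habs
        _ = (∑ k, d k (y k)) ^ 2 := sq_abs _
    have h2 : (1:ℝ) ≤ (∑ k, d k (y k)) ^ 2 / t ^ 2 := (one_le_div (by positivity)).2 h1
    calc (∏ k, w k (y k)) = (∏ k, w k (y k)) * 1 := (mul_one _).symm
      _ ≤ (∏ k, w k (y k)) * ((∑ k, d k (y k)) ^ 2 / t ^ 2) :=
          mul_le_mul_of_nonneg_left h2 (hμ0 y)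
      _ = (∏ k, w k (y k)) * (∑ k, d k (y k)) ^ 2 / t ^ 2 := (mul_div_assoc _ _ _).symm
  calc ∑ y ∈ A, ∏ k, w k (y k)
      ≤ ∑ y ∈ A, (∏ k, w k (y k)) * (∑ k, d k (y k)) ^ 2 / t ^ 2 := step1
    _ ≤ ∑ y : Fin n → Y, (∏ k, w k (y k)) * (∑ k, d k (y k)) ^ 2 / t ^ 2 := by
        refine Finset.sum_le_sum_of_subset_of_nonneg (Finset.subset_univ A) fun y _ _ => ?_
        have := hμ0 y
        positivity
    _ = (∑ y : Fin n → Y, (∏ k, w k (y k)) * (∑ k, d k (y k)) ^ 2) / t ^ 2 := by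
        rw [← Finset.sum_div]
    _ = (∑ k, ∑ b, w k b * (f k b - (∑ b', w k b' * f k b')) ^ 2) / t ^ 2 := by
        rw [key]

end ProdFact


section Entropy
variable {U : Type*} [Fintype U]

lemma shEntropy_le_logb_card (p : U → ℝ) (h0 : ∀ u, 0 ≤ p u) (h1 : ∑ u : U, p u = 1) :
    shEntropy p ≤ Real.logb 2 (Fintype.card U) := by
  have hne : Nonempty U := by
    by_contra h
    rw [not_nonempty_iff] at h
    rw [Finset.sum_eq_zero (fun u _ => (h.elim u))] at h1
    norm_num at h1
  have hc : (0:ℝ) < (Fintype.card U : ℝ) := by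
    have := Fintype.card_pos (α := U)
    exact_mod_cast this
  set c : ℝ := (Fintype.card U : ℝ) with hcdef
  have hlog2 : (0:ℝ) < Real.log 2 := Real.log_pos (by norm_num)
  have term : ∀ u : U, -(p u * Real.logb 2 (p u)) - p u * Real.logb 2 c
      ≤ (1/c - p u) / Real.log 2 := by
    intro u
    rcases eq_or_lt_of_le (h0 u) with h | h
    · rw [← h]
      simp only [zero_mul, mul_zero, neg_zero, zero_sub, neg_zero, sub_zero]
      positivity
    · have hpc : 0 < p u * c := mul_pos h hc
      have e1 : -(p u * Real.logb 2 (p u)) - p u * Real.logb 2 c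
          = p u * Real.logb 2 ((p u * c)⁻¹) := by
        rw [Real.logb_inv, Real.logb_mul (ne_of_gt h) (ne_of_gt hc)]
        ring
      rw [e1, Real.logb, Real.log_inv]
      have e2 : Real.log (p u * c) ≥ 1 - (p u * c)⁻¹ := by
        have := Real.log_le_sub_one_of_pos (x := (p u * c)⁻¹) (by positivity)
        rw [Real.log_inv] at this
        linarith
      have e3 : -Real.log (p u * c) ≤ (p u * c)⁻¹ - 1 := by linarith
      have e4 : p u * (-Real.log (p u * c) / Real.log 2)
          ≤ p u * (((p u * c)⁻¹ - 1) / Real.log 2) := by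
        apply mul_le_mul_of_nonneg_left _ (le_of_lt h)
        exact div_le_div_of_nonneg_right e3 hlog2.le
      refine e4.trans_eq ?_
      rw [mul_div_assoc']
      congr 1
      field_simp
  have sum_le : ∑ u : U, (-(p u * Real.logb 2 (p u)) - p u * Real.logb 2 c)
      ≤ ∑ u : U, (1/c - p u) / Real.log 2 := Finset.sum_le_sum fun u _ => term u
  have lhs_eq : ∑ u : U, (-(p u * Real.logb 2 (p u)) - p u * Real.logb 2 c)
      = shEntropy p - Real.logb 2 c := by
    rw [Finset.sum_sub_distrib, ← Finset.sum_mul, h1, one_mul, shEntropy,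
      ← Finset.sum_neg_distrib]
  have rhs_eq : ∑ u : U, (1/c - p u) / Real.log 2 = 0 := by
    rw [← Finset.sum_div, Finset.sum_sub_distrib, h1, Finset.sum_const, Finset.card_univ,
      nsmul_eq_mul, ← hcdef, mul_one_div, div_self (ne_of_gt hc)]
    simp
  rw [lhs_eq, rhs_eq] at sum_le
  linarith

end Entropy


section Coarsen
variable {X Y S T : Type*} [Fintype X] [Fintype Y] [Fintype S] [Fintype T]

lemma PjointClass_nonneg (q : X → Y → ℝ) (hq : ∀ a b, 0 ≤ q a b) (cX : X → S) (cY : Y → T)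
    (s : S) (t : T) : 0 ≤ PjointClass q cX cY s t := by
  refine Finset.sum_nonneg fun a _ => Finset.sum_nonneg fun b _ => ?_
  by_cases h : cX a = s ∧ cY b = t <;> simp [h, hq a b]

lemma le_PjointClass (q : X → Y → ℝ) (hq : ∀ a b, 0 ≤ q a b) (cX : X → S) (cY : Y → T)
    (a : X) (b : Y) : q a b ≤ PjointClass q cX cY (cX a) (cY b) := by
  unfold PjointClass
  have h1 : ∀ a' : X, 0 ≤ ∑ b', if cX a' = cX a ∧ cY b' = cY b then q a' b' else 0 := by
    intro a'
    refine Finset.sum_nonneg fun b' _ => ?_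
    by_cases h : cX a' = cX a ∧ cY b' = cY b <;> simp [h, hq a' b']
  have h2 : q a b ≤ ∑ b', if cX a = cX a ∧ cY b' = cY b then q a b' else 0 := by
    have : q a b = (if cX a = cX a ∧ cY b = cY b then q a b else 0) := by simp
    rw [this]
    refine Finset.single_le_sum (f := fun b' => if cX a = cX a ∧ cY b' = cY b then q a b' else 0)
      (fun b' _ => ?_) (Finset.mem_univ b)
    split <;> simp [hq a b']
  calc q a b ≤ ∑ b', if cX a = cX a ∧ cY b' = cY b then q a b' else 0 := h2
    _ ≤ ∑ a', ∑ b', if cX a' = cX a ∧ cY b' = cY b then q a' b' else 0 :=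
      Finset.single_le_sum
        (f := fun a' => ∑ b', if cX a' = cX a ∧ cY b' = cY b then q a' b' else 0)
        (fun a' _ => h1 a') (Finset.mem_univ a)

lemma semJointEntropy_eq (q : X → Y → ℝ) (cX : X → S) (cY : Y → T) :
    semJointEntropy q cX cY
      = -∑ a : X, ∑ b : Y, q a b * Real.logb 2 (PjointClass q cX cY (cX a) (cY b)) := by
  unfold semJointEntropy
  congr 1
  have e1 : ∀ s t, PjointClass q cX cY s t * Real.logb 2 (PjointClass q cX cY s t)
      = ∑ a : X, ∑ b : Y,
          (if cX a = s ∧ cY b = t then q a b * Real.logb 2 (PjointClass q cX cY s t) else 0) := by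
    intro s t
    rw [PjointClass, Finset.sum_mul]
    refine Finset.sum_congr rfl fun a _ => ?_
    rw [Finset.sum_mul]
    refine Finset.sum_congr rfl fun b _ => ?_
    by_cases h : cX a = s ∧ cY b = t <;> simp [h]
  calc ∑ s : S, ∑ t : T, PjointClass q cX cY s t * Real.logb 2 (PjointClass q cX cY s t)
      = ∑ s : S, ∑ t : T, ∑ a : X, ∑ b : Y,
          (if cX a = s ∧ cY b = t then q a b * Real.logb 2 (PjointClass q cX cY s t) else 0) :=
        Finset.sum_congr rfl fun s _ => Finset.sum_congr rfl fun t _ => e1 s t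
    _ = ∑ s : S, ∑ a : X, ∑ t : T, ∑ b : Y,
          (if cX a = s ∧ cY b = t then q a b * Real.logb 2 (PjointClass q cX cY s t) else 0) :=
        Finset.sum_congr rfl fun s _ => Finset.sum_comm
    _ = ∑ a : X, ∑ s : S, ∑ t : T, ∑ b : Y,
          (if cX a = s ∧ cY b = t then q a b * Real.logb 2 (PjointClass q cX cY s t) else 0) :=
        Finset.sum_comm
    _ = ∑ a : X, ∑ s : S, ∑ b : Y, ∑ t : T,
          (if cX a = s ∧ cY b = t then q a b * Real.logb 2 (PjointClass q cX cY s t) else 0) :=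
        Finset.sum_congr rfl fun a _ => Finset.sum_congr rfl fun s _ => Finset.sum_comm
    _ = ∑ a : X, ∑ b : Y, ∑ s : S, ∑ t : T,
          (if cX a = s ∧ cY b = t then q a b * Real.logb 2 (PjointClass q cX cY s t) else 0) :=
        Finset.sum_congr rfl fun a _ => Finset.sum_comm
    _ = ∑ a : X, ∑ b : Y, q a b * Real.logb 2 (PjointClass q cX cY (cX a) (cY b)) := by
        refine Finset.sum_congr rfl fun a _ => Finset.sum_congr rfl fun b _ => ?_
        have inner : ∀ s : S, (∑ t : T,
            if cX a = s ∧ cY b = t then q a b * Real.logb 2 (PjointClass q cX cY s t) else 0)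
            = (if cX a = s then q a b * Real.logb 2 (PjointClass q cX cY s (cY b)) else 0) := by
          intro s
          by_cases hs : cX a = s
          · simp only [hs, true_and, if_true]
            rw [Finset.sum_ite_eq univ (cY b)
              (fun t => q a b * Real.logb 2 (PjointClass q cX cY s t)), if_pos (Finset.mem_univ _)]
          · simp [hs]
        rw [Finset.sum_congr rfl (fun s _ => inner s),
          Finset.sum_ite_eq univ (cX a)
            (fun s => q a b * Real.logb 2 (PjointClass q cX cY s (cY b))),
          if_pos (Finset.mem_univ _)]

lemma semJointEntropy_le_shJointEntropy (q : X → Y → ℝ) (hq : ∀ a b, 0 ≤ q a b)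
    (cX : X → S) (cY : Y → T) :
    semJointEntropy q cX cY ≤ shJointEntropy q := by
  rw [semJointEntropy_eq, shJointEntropy]
  rw [neg_le_neg_iff]
  refine Finset.sum_le_sum fun a _ => Finset.sum_le_sum fun b _ => ?_
  rcases eq_or_lt_of_le (hq a b) with h | h
  · rw [← h]; simp
  · have hQ : q a b ≤ PjointClass q cX cY (cX a) (cY b) := le_PjointClass q hq cX cY a b
    have := (Real.logb_le_logb (b := 2) (by norm_num) h (lt_of_lt_of_le h hQ)).2 hQ
    exact mul_le_mul_of_nonneg_left this (le_of_lt h)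

end Coarsen


section SingleLetter
variable {X Y S T : Type*} [Fintype X] [Fintype Y] [Fintype S] [Fintype T]

lemma joint_total (W : X → Y → ℝ) (hW1 : ∀ x, ∑ y : Y, W x y = 1)
    (p : X → ℝ) (hp1 : ∑ x : X, p x = 1) :
    ∑ a : X, ∑ b : Y, p a * W a b = 1 := by
  calc ∑ a : X, ∑ b : Y, p a * W a b = ∑ a : X, p a * ∑ b : Y, W a b := by
        refine Finset.sum_congr rfl fun a _ => ?_
        rw [Finset.mul_sum]
    _ = ∑ a : X, p a := by
        refine Finset.sum_congr rfl fun a _ => ?_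
        rw [hW1 a, mul_one]
    _ = 1 := hp1

lemma margU_eq (W : X → Y → ℝ) (hW1 : ∀ x, ∑ y : Y, W x y = 1) (p : X → ℝ) :
    margU (fun x y => p x * W x y) = p := by
  funext a
  unfold margU
  rw [← Finset.mul_sum, hW1 a, mul_one]

lemma margV_sum (W : X → Y → ℝ) (hW1 : ∀ x, ∑ y : Y, W x y = 1)
    (p : X → ℝ) (hp1 : ∑ x : X, p x = 1) :
    ∑ b : Y, margV (fun x y => p x * W x y) b = 1 := by
  unfold margV
  rw [Finset.sum_comm]
  exact joint_total W hW1 p hp1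

lemma semJointEntropy_nonneg (q : X → Y → ℝ) (hq0 : ∀ a b, 0 ≤ q a b)
    (hq1 : ∑ a : X, ∑ b : Y, q a b = 1) (cX : X → S) (cY : Y → T) :
    0 ≤ semJointEntropy q cX cY := by
  unfold semJointEntropy
  rw [neg_nonneg]
  refine Finset.sum_nonpos fun s _ => Finset.sum_nonpos fun t _ => ?_
  have hQ0 : 0 ≤ PjointClass q cX cY s t := PjointClass_nonneg q hq0 cX cY s t
  have hQ1 : PjointClass q cX cY s t ≤ 1 := by
    rw [← hq1]
    unfold PjointClass
    refine Finset.sum_le_sum fun a _ => Finset.sum_le_sum fun b _ => ?_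
    split <;> simp [hq0 a b]
  have := Real.logb_nonpos (b := 2) (by norm_num) hQ0 hQ1
  calc PjointClass q cX cY s t * Real.logb 2 (PjointClass q cX cY s t)
      ≤ PjointClass q cX cY s t * 0 := mul_le_mul_of_nonneg_left this hQ0
    _ = 0 := mul_zero _

lemma upSMI_le_semCapacity (W : X → Y → ℝ) (hW0 : ∀ x y, 0 ≤ W x y)
    (hW1 : ∀ x, ∑ y : Y, W x y = 1) (cX : X → S) (cY : Y → T)
    (p : X → ℝ) (hp0 : ∀ x, 0 ≤ p x) (hp1 : ∑ x : X, p x = 1) :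
    upSMI (fun x y => p x * W x y) cX cY ≤ semCapacity W cX cY := by
  have hbdd : ∀ r ∈ {r : ℝ | ∃ p : X → ℝ, (∀ x, 0 ≤ p x) ∧ (∑ x : X, p x = 1) ∧
      r = upSMI (fun x y => p x * W x y) cX cY},
      r ≤ Real.logb 2 (Fintype.card X) + Real.logb 2 (Fintype.card Y) := by
    rintro r ⟨p', hp'0, hp'1, rfl⟩
    unfold upSMI
    have h1 : shEntropy (margU fun x y => p' x * W x y) ≤ Real.logb 2 (Fintype.card X) := by
      rw [margU_eq W hW1 p']
      exact shEntropy_le_logb_card p' hp'0 hp'1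
    have h2 : shEntropy (margV fun x y => p' x * W x y) ≤ Real.logb 2 (Fintype.card Y) := by
      refine shEntropy_le_logb_card _ (fun b => ?_) (margV_sum W hW1 p' hp'1)
      exact Finset.sum_nonneg fun a _ => mul_nonneg (hp'0 a) (hW0 a b)
    have h3 : 0 ≤ semJointEntropy (fun x y => p' x * W x y) cX cY :=
      semJointEntropy_nonneg _ (fun a b => mul_nonneg (hp'0 a) (hW0 a b))
        (joint_total W hW1 p' hp'1) cX cY
    linarith
  exact le_csSup ⟨_, hbdd⟩ ⟨p, hp0, hp1, rfl⟩

lemma single_letter (W : X → Y → ℝ) (hW0 : ∀ x y, 0 ≤ W x y) (hW1 : ∀ x, ∑ y : Y, W x y = 1)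
    (cX : X → S) (cY : Y → T) (p : X → ℝ) (hp0 : ∀ x, 0 ≤ p x) (hp1 : ∑ x : X, p x = 1) :
    ∑ a : X, p a *
        (∑ b : Y, W a b * (Real.logb 2 (W a b) - Real.logb 2 (∑ a' : X, p a' * W a' b)))
      ≤ semCapacity W cX cY := by
  refine le_trans ?_ (upSMI_le_semCapacity W hW0 hW1 cX cY p hp0 hp1)
  have hq0 : ∀ a b, 0 ≤ p a * W a b := fun a b => mul_nonneg (hp0 a) (hW0 a b)
  set T1 : ℝ := ∑ a : X, ∑ b : Y, p a * W a b * Real.logb 2 (W a b) with hT1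
  set T2 : ℝ := ∑ a : X, ∑ b : Y,
      p a * W a b * Real.logb 2 (margV (fun x y => p x * W x y) b) with hT2
  have lhs_eq : ∑ a : X, p a *
      (∑ b : Y, W a b * (Real.logb 2 (W a b) - Real.logb 2 (∑ a' : X, p a' * W a' b)))
      = T1 - T2 := by
    rw [hT1, hT2, ← Finset.sum_sub_distrib]
    refine Finset.sum_congr rfl fun a _ => ?_
    rw [← Finset.sum_sub_distrib, Finset.mul_sum]
    refine Finset.sum_congr rfl fun b _ => ?_
    have : margV (fun x y => p x * W x y) b = ∑ a' : X, p a' * W a' b := rfl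
    rw [this]
    ring
  have hshV : shEntropy (margV (fun x y => p x * W x y)) = -T2 := by
    unfold shEntropy
    rw [hT2, neg_inj]
    rw [Finset.sum_comm]
    refine Finset.sum_congr rfl fun b _ => ?_
    have : margV (fun x y => p x * W x y) b = ∑ a' : X, p a' * W a' b := rfl
    rw [this, Finset.sum_mul]
  have hjoint : shJointEntropy (fun x y => p x * W x y) = shEntropy p - T1 := by
    have key : ∀ a b, p a * W a b * Real.logb 2 (p a * W a b)
        = p a * W a b * Real.logb 2 (p a) + p a * W a b * Real.logb 2 (W a b) := by
      intro a b
      rcases eq_or_lt_of_le (hq0 a b) with h | h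
      · rw [← h]
        simp
      · have hpa : p a ≠ 0 := by
          intro h0
          rw [h0, zero_mul] at h
          exact lt_irrefl 0 h
        have hWab : W a b ≠ 0 := by
          intro h0
          rw [h0, mul_zero] at h
          exact lt_irrefl 0 h
        rw [Real.logb_mul hpa hWab]
        ring
    have e2 : ∑ a : X, ∑ b : Y, p a * W a b * Real.logb 2 (p a * W a b)
        = (∑ a : X, p a * Real.logb 2 (p a)) + T1 := by
      rw [hT1, ← Finset.sum_add_distrib]
      refine Finset.sum_congr rfl fun a _ => ?_
      have e3 : p a * Real.logb 2 (p a) = ∑ b : Y, p a * W a b * Real.logb 2 (p a) := by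
        rw [← Finset.sum_mul, ← Finset.mul_sum, hW1 a, mul_one]
      rw [e3, ← Finset.sum_add_distrib]
      exact Finset.sum_congr rfl fun b _ => key a b
    have e0 : shJointEntropy (fun x y => p x * W x y)
        = -∑ a : X, ∑ b : Y, p a * W a b * Real.logb 2 (p a * W a b) := rfl
    rw [e0, e2, shEntropy]
    ring
  have hcoarse : semJointEntropy (fun x y => p x * W x y) cX cY
      ≤ shJointEntropy (fun x y => p x * W x y) :=
    semJointEntropy_le_shJointEntropy _ hq0 cX cY
  rw [lhs_eq]
  unfold upSMI
  rw [margU_eq W hW1 p, hshV]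
  linarith

end SingleLetter


lemma permsg {X Y S T : Type*} [Fintype X] [Fintype Y] [Fintype S] [Fintype T]
    (W : X → Y → ℝ) (hW0 : ∀ x y, 0 ≤ W x y) (hW1 : ∀ x, ∑ y : Y, W x y = 1)
    (cX : X → S) (cY : Y → T) (Cs : ℝ) (hCs : Cs = semCapacity W cX cY)
    (δ : ℝ) (hδ : 0 < δ)
    (wmin : ℝ) (hwmin_pos : 0 < wmin) (hwmin_le : ∀ x y, 0 < W x y → wmin ≤ W x y)
    (hwmin_le1 : wmin ≤ 1) (hWle1 : ∀ x y, W x y ≤ 1)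
    (n : ℕ) (hn : 1 ≤ n) (x : Fin n → X) (p : X → ℝ)
    (hp : p = fun a => (((Finset.univ.filter (fun k => x k = a)).card : ℕ) : ℝ) / n)
    (D : Finset (Fin n → Y)) :
    ∑ y ∈ D, ∏ k, W (x k) (y k)
      ≤ (2:ℝ) ^ ((n:ℝ) * (Cs + δ)) * (∑ y ∈ D, ∏ k, (∑ a, p a * W a (y k)))
        + 4 * (Real.logb 2 (n:ℝ) + (-Real.logb 2 wmin)) ^ 2 / ((n:ℝ) * δ ^ 2) := by
  classical
  have hnR : (0:ℝ) < n := by exact_mod_cast hn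
  have hnne : (n:ℝ) ≠ 0 := ne_of_gt hnR
  have hn1 : (1:ℝ) ≤ (n:ℝ) := by exact_mod_cast hn
  set c0 : ℝ := -Real.logb 2 wmin with hc0def
  have hc0 : 0 ≤ c0 := by
    rw [hc0def, neg_nonneg]
    exact Real.logb_nonpos (by norm_num) hwmin_pos.le hwmin_le1
  -- basic facts about p
  have hp0 : ∀ a, 0 ≤ p a := by
    intro a; rw [hp]; positivity
  have hcnt_sum : ∑ a, ((Finset.univ.filter (fun k => x k = a)).card : ℕ) = n := by
    have h := Finset.card_eq_sum_card_fiberwise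
      (f := x) (s := Finset.univ) (t := Finset.univ) (fun k _ => Finset.mem_univ _)
    rw [Finset.card_univ, Fintype.card_fin] at h
    exact h.symm
  have hp1 : ∑ a, p a = 1 := by
    rw [hp, ← Finset.sum_div]
    rw [show (∑ a, (((Finset.univ.filter (fun k => x k = a)).card : ℕ) : ℝ))
        = ((∑ a, ((Finset.univ.filter (fun k => x k = a)).card : ℕ) : ℕ) : ℝ) by push_cast; rfl]
    rw [hcnt_sum, div_self hnne]
  -- output distribution
  set q : Y → ℝ := fun b => ∑ a, p a * W a b with hqdef
  have hq0 : ∀ b, 0 ≤ q b := fun b => Finset.sum_nonneg fun a _ => mul_nonneg (hp0 a) (hW0 a b)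
  have hq1 : ∑ b, q b = 1 := by
    rw [hqdef, Finset.sum_comm]
    calc ∑ a, ∑ b, p a * W a b = ∑ a, p a * ∑ b, W a b := by
          refine Finset.sum_congr rfl fun a _ => ?_
          rw [Finset.mul_sum]
      _ = 1 := by
          rw [Finset.sum_congr rfl fun a _ => by rw [hW1 a, mul_one]]
          exact hp1
  have hqle1 : ∀ b, q b ≤ 1 := by
    intro b
    rw [← hq1]
    exact Finset.single_le_sum (fun b' _ => hq0 b') (Finset.mem_univ b)
  have hqlow : ∀ (k : Fin n) b, 0 < W (x k) b → wmin / n ≤ q b := by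
    intro k b hWb
    have hk1 : 1 ≤ (Finset.univ.filter (fun k' => x k' = x k)).card :=
      Finset.card_pos.2 ⟨k, Finset.mem_filter.2 ⟨Finset.mem_univ _, rfl⟩⟩
    have h1 : (1:ℝ)/n ≤ p (x k) := by
      rw [hp]
      apply div_le_div_of_nonneg_right _ hnR.le
      exact_mod_cast hk1
    calc wmin / n = (1/n) * wmin := by ring
      _ ≤ p (x k) * W (x k) b :=
          mul_le_mul h1 (hwmin_le _ _ hWb) hwmin_pos.le (hp0 _)
      _ ≤ q b := Finset.single_le_sum (f := fun a => p a * W a b)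
          (fun a _ => mul_nonneg (hp0 a) (hW0 a b)) (Finset.mem_univ _)
  set cn : ℝ := Real.logb 2 (n:ℝ) + c0 with hcndef
  have hlogn0 : 0 ≤ Real.logb 2 (n:ℝ) := Real.logb_nonneg (by norm_num) hn1
  have hcn0 : 0 ≤ cn := by rw [hcndef]; linarith
  set f : Fin n → Y → ℝ := fun k b => Real.logb 2 (W (x k) b) - Real.logb 2 (q b) with hfdef
  have hfb : ∀ k b, 0 < W (x k) b → |f k b| ≤ cn := by
    intro k b h
    have hwle := hwmin_le _ _ h
    have l1 : Real.logb 2 wmin ≤ Real.logb 2 (W (x k) b) :=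
      (Real.logb_le_logb (by norm_num) hwmin_pos (lt_of_lt_of_le hwmin_pos hwle)).2 hwle
    have l2 : Real.logb 2 (W (x k) b) ≤ 0 :=
      Real.logb_nonpos (by norm_num) h.le (hWle1 _ _)
    have hql := hqlow k b h
    have hqpos : 0 < q b := lt_of_lt_of_le (by positivity) hql
    have l3 : Real.logb 2 (wmin/n) ≤ Real.logb 2 (q b) :=
      (Real.logb_le_logb (by norm_num) (by positivity) hqpos).2 hql
    have l4 : Real.logb 2 (q b) ≤ 0 := Real.logb_nonpos (by norm_num) (hq0 b) (hqle1 b)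
    have l5 : Real.logb 2 (wmin/n) = Real.logb 2 wmin - Real.logb 2 (n:ℝ) :=
      Real.logb_div (ne_of_gt hwmin_pos) hnne
    rw [l5] at l3
    simp only [hfdef]
    rw [abs_le]
    constructor
    · rw [hcndef, hc0def]; linarith
    · rw [hcndef, hc0def]; linarith
  set E : Fin n → ℝ := fun k => ∑ b, W (x k) b * f k b with hEdef
  have hEb : ∀ k, |E k| ≤ cn := by
    intro k
    have h1 : |E k| ≤ ∑ b, |W (x k) b * f k b| := by
      simp only [hEdef]
      exact Finset.abs_sum_le_sum_abs _ _
    have h2 : ∑ b, |W (x k) b * f k b| ≤ ∑ b, W (x k) b * cn := by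
      refine Finset.sum_le_sum fun b _ => ?_
      rw [abs_mul, abs_of_nonneg (hW0 _ _)]
      rcases eq_or_lt_of_le (hW0 (x k) b) with h | h
      · rw [← h]; simp
      · exact mul_le_mul_of_nonneg_left (hfb k b h) h.le
    rw [← Finset.sum_mul, hW1, one_mul] at h2
    linarith
  have hVar : ∑ k, ∑ b, W (x k) b * (f k b - E k)^2 ≤ n * (2*cn)^2 := by
    have h1 : ∀ k : Fin n, ∑ b, W (x k) b * (f k b - E k)^2 ≤ (2*cn)^2 := by
      intro k
      have h2 : ∀ b, W (x k) b * (f k b - E k)^2 ≤ W (x k) b * (2*cn)^2 := by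
        intro b
        rcases eq_or_lt_of_le (hW0 (x k) b) with h | h
        · rw [← h]; simp
        · refine mul_le_mul_of_nonneg_left ?_ h.le
          have hf1 := hfb k b h
          have hE1 := hEb k
          have habs : |f k b - E k| ≤ 2*cn := by
            calc |f k b - E k| ≤ |f k b| + |E k| := abs_sub _ _
              _ ≤ 2*cn := by linarith
          calc (f k b - E k)^2 = |f k b - E k|^2 := (sq_abs _).symm
            _ ≤ (2*cn)^2 := by
                apply pow_le_pow_left₀ (abs_nonneg _) habs
      calc ∑ b, W (x k) b * (f k b - E k)^2 ≤ ∑ b, W (x k) b * (2*cn)^2 :=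
            Finset.sum_le_sum fun b _ => h2 b
        _ = (2*cn)^2 := by rw [← Finset.sum_mul, hW1, one_mul]
    calc ∑ k, ∑ b, W (x k) b * (f k b - E k)^2 ≤ ∑ k : Fin n, (2*cn)^2 :=
          Finset.sum_le_sum fun k _ => h1 k
      _ = n * (2*cn)^2 := by
          rw [Finset.sum_const, Finset.card_univ, Fintype.card_fin, nsmul_eq_mul]
  have hES : ∑ k, E k ≤ n * Cs := by
    have hregroup : ∑ k, E k = ∑ a, (((Finset.univ.filter (fun k => x k = a)).card : ℕ) : ℝ) *
        (∑ b, W a b * (Real.logb 2 (W a b) - Real.logb 2 (q b))) := by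
      calc ∑ k, E k
          = ∑ a, ∑ k ∈ Finset.univ.filter (fun k => x k = a), E k :=
            (Finset.sum_fiberwise Finset.univ x (fun k => E k)).symm
        _ = ∑ a, ∑ k ∈ Finset.univ.filter (fun k => x k = a),
              (∑ b, W a b * (Real.logb 2 (W a b) - Real.logb 2 (q b))) := by
            refine Finset.sum_congr rfl fun a _ => Finset.sum_congr rfl fun k hk => ?_
            have ha := (Finset.mem_filter.1 hk).2
            simp only [hEdef, hfdef, ha]
        _ = _ := by
            refine Finset.sum_congr rfl fun a _ => ?_
            rw [Finset.sum_const, nsmul_eq_mul]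
    have hsl := single_letter W hW0 hW1 cX cY p hp0 hp1
    rw [← hCs] at hsl
    have hqsl : ∀ b : Y, (∑ a', p a' * W a' b) = q b := fun b => rfl
    have hsl2 : ∑ a, p a * (∑ b, W a b * (Real.logb 2 (W a b) - Real.logb 2 (q b))) ≤ Cs := by
      refine le_trans (le_of_eq ?_) hsl
      refine Finset.sum_congr rfl fun a _ => ?_
      rw [hqdef]
    have hscale : ∑ a, (((Finset.univ.filter (fun k => x k = a)).card : ℕ) : ℝ) *
        (∑ b, W a b * (Real.logb 2 (W a b) - Real.logb 2 (q b)))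
        = n * ∑ a, p a * (∑ b, W a b * (Real.logb 2 (W a b) - Real.logb 2 (q b))) := by
      rw [Finset.mul_sum]
      refine Finset.sum_congr rfl fun a _ => ?_
      rw [hp]
      beta_reduce
      rw [← mul_assoc, mul_div_cancel₀ _ hnne]
    rw [hregroup, hscale]
    exact mul_le_mul_of_nonneg_left hsl2 hnR.le
  -- the splitting
  set Γ : ℝ := (2:ℝ) ^ ((n:ℝ) * (Cs + δ)) with hΓdef
  have hΓpos : 0 < Γ := Real.rpow_pos_of_pos two_pos _
  have hqq0 : ∀ y : Fin n → Y, 0 ≤ ∏ k, q (y k) :=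
    fun y => Finset.prod_nonneg fun k _ => hq0 _
  have hμ0 : ∀ y : Fin n → Y, 0 ≤ ∏ k, W (x k) (y k) :=
    fun y => Finset.prod_nonneg fun k _ => hW0 _ _
  have hsplit : ∑ y ∈ D, ∏ k, W (x k) (y k)
      ≤ Γ * (∑ y ∈ D, ∏ k, q (y k))
        + ∑ y ∈ Finset.univ.filter (fun y : Fin n → Y =>
            Γ * ∏ k, q (y k) < ∏ k, W (x k) (y k)), ∏ k, W (x k) (y k) := by
    have e1 := Finset.sum_filter_add_sum_filter_not D
      (fun y : Fin n → Y => ∏ k, W (x k) (y k) ≤ Γ * ∏ k, q (y k))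
      (fun y => ∏ k, W (x k) (y k))
    have e2 : ∑ y ∈ D.filter (fun y => ∏ k, W (x k) (y k) ≤ Γ * ∏ k, q (y k)),
        ∏ k, W (x k) (y k) ≤ Γ * (∑ y ∈ D, ∏ k, q (y k)) := by
      rw [Finset.mul_sum]
      calc ∑ y ∈ D.filter (fun y => ∏ k, W (x k) (y k) ≤ Γ * ∏ k, q (y k)),
            ∏ k, W (x k) (y k)
          ≤ ∑ y ∈ D.filter (fun y => ∏ k, W (x k) (y k) ≤ Γ * ∏ k, q (y k)),
            Γ * ∏ k, q (y k) :=
            Finset.sum_le_sum fun y hy => (Finset.mem_filter.1 hy).2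
        _ ≤ ∑ y ∈ D, Γ * ∏ k, q (y k) :=
            Finset.sum_le_sum_of_subset_of_nonneg (Finset.filter_subset _ _)
              (fun y _ _ => mul_nonneg hΓpos.le (hqq0 y))
    have e3 : ∑ y ∈ D.filter (fun y => ¬(∏ k, W (x k) (y k) ≤ Γ * ∏ k, q (y k))),
        ∏ k, W (x k) (y k)
        ≤ ∑ y ∈ Finset.univ.filter (fun y : Fin n → Y =>
            Γ * ∏ k, q (y k) < ∏ k, W (x k) (y k)), ∏ k, W (x k) (y k) := by
      refine Finset.sum_le_sum_of_subset_of_nonneg ?_ (fun y _ _ => hμ0 y)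
      intro y hy
      rw [Finset.mem_filter] at hy ⊢
      exact ⟨Finset.mem_univ _, not_le.1 hy.2⟩
    linarith
  -- the tail bound via Chebyshev
  have htail : ∑ y ∈ Finset.univ.filter (fun y : Fin n → Y =>
        Γ * ∏ k, q (y k) < ∏ k, W (x k) (y k)), ∏ k, W (x k) (y k)
      ≤ 4 * cn^2 / ((n:ℝ) * δ^2) := by
    have hch := cheb (fun k b => W (x k) b) (fun k b => hW0 _ _) (fun k => hW1 _)
      f ((n:ℝ) * δ) (by positivity)
      (Finset.univ.filter (fun y : Fin n → Y =>
        Γ * ∏ k, q (y k) < ∏ k, W (x k) (y k))) ?_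
    · refine le_trans hch ?_
      have hEf : ∀ k : Fin n, (∑ b, W (x k) b * f k b) = E k := fun k => rfl
      have h1 : (∑ k, ∑ b, W (x k) b * (f k b - (∑ b', W (x k) b' * f k b')) ^ 2)
          ≤ (n:ℝ) * (2*cn)^2 := by
        refine le_trans (le_of_eq ?_) hVar
        refine Finset.sum_congr rfl fun k _ => Finset.sum_congr rfl fun b _ => ?_
        rw [hEf k]
      have h2 : ((n:ℝ) * (2*cn)^2) / ((n:ℝ)*δ)^2 = 4 * cn^2 / ((n:ℝ) * δ^2) := by
        field_simp
        ring
      calc (∑ k, ∑ b, W (x k) b * (f k b - (∑ b', W (x k) b' * f k b')) ^ 2) / ((n:ℝ)*δ)^2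
          ≤ ((n:ℝ) * (2*cn)^2) / ((n:ℝ)*δ)^2 := by
            apply div_le_div_of_nonneg_right h1 (by positivity)
        _ = 4 * cn^2 / ((n:ℝ) * δ^2) := h2
    · intro y hy
      have hlt := (Finset.mem_filter.1 hy).2
      have hμpos : 0 < ∏ k, W (x k) (y k) :=
        lt_of_le_of_lt (mul_nonneg hΓpos.le (hqq0 y)) hlt
      have hWpos : ∀ k, 0 < W (x k) (y k) := by
        intro k
        rcases eq_or_lt_of_le (hW0 (x k) (y k)) with h | h
        · exfalso
          rw [Finset.prod_eq_zero (Finset.mem_univ k) h.symm] at hμpos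
          exact lt_irrefl 0 hμpos
        · exact h
      have hqpos : ∀ k, 0 < q (y k) :=
        fun k => lt_of_lt_of_le (by positivity) (hqlow k (y k) (hWpos k))
      have hqqpos : 0 < ∏ k, q (y k) := Finset.prod_pos fun k _ => hqpos k
      have hlog1 : Real.logb 2 (∏ k, W (x k) (y k)) = ∑ k, Real.logb 2 (W (x k) (y k)) := by
        rw [Real.logb, Real.log_prod (fun k _ => (hWpos k).ne'), Finset.sum_div]
        rfl
      have hlog2 : Real.logb 2 (∏ k, q (y k)) = ∑ k, Real.logb 2 (q (y k)) := by
        rw [Real.logb, Real.log_prod (fun k _ => (hqpos k).ne'), Finset.sum_div]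
        rfl
      have hlogΓ : Real.logb 2 (Γ * ∏ k, q (y k))
          = (n:ℝ) * (Cs + δ) + ∑ k, Real.logb 2 (q (y k)) := by
        rw [Real.logb_mul (ne_of_gt hΓpos) (ne_of_gt hqqpos), hΓdef,
          Real.logb_rpow two_pos (by norm_num), hlog2]
      have hmono : Real.logb 2 (Γ * ∏ k, q (y k)) ≤ Real.logb 2 (∏ k, W (x k) (y k)) :=
        (Real.logb_le_logb (by norm_num) (mul_pos hΓpos hqqpos) hμpos).2 hlt.le
      rw [hlogΓ, hlog1] at hmono
      have hsumf : ∑ k, f k (y k) = ∑ k, Real.logb 2 (W (x k) (y k))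
          - ∑ k, Real.logb 2 (q (y k)) := by
        rw [← Finset.sum_sub_distrib]
      have hfE : ∀ k : Fin n, (∑ b, W (x k) b * f k b) = E k := fun k => rfl
      have hgoal : (n:ℝ) * δ ≤ ∑ k, (f k (y k) - (∑ b, W (x k) b * f k b)) := by
        rw [Finset.sum_sub_distrib, hsumf]
        have : ∑ k, (∑ b, W (x k) b * f k b) = ∑ k, E k :=
          Finset.sum_congr rfl fun k _ => hfE k
        rw [this]
        have := hES
        nlinarith [hES]
      exact le_trans hgoal (le_abs_self _)
  calc ∑ y ∈ D, ∏ k, W (x k) (y k)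
      ≤ Γ * (∑ y ∈ D, ∏ k, q (y k))
        + ∑ y ∈ Finset.univ.filter (fun y : Fin n → Y =>
            Γ * ∏ k, q (y k) < ∏ k, W (x k) (y k)), ∏ k, W (x k) (y k) := hsplit
    _ ≤ Γ * (∑ y ∈ D, ∏ k, q (y k)) + 4 * cn^2 / ((n:ℝ) * δ^2) := by linarith
    _ = (2:ℝ) ^ ((n:ℝ) * (Cs + δ)) * (∑ y ∈ D, ∏ k, (∑ a, p a * W a (y k)))
        + 4 * (Real.logb 2 (n:ℝ) + (-Real.logb 2 wmin)) ^ 2 / ((n:ℝ) * δ ^ 2) := by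
      rw [hΓdef, hcndef, hc0def]


lemma keybound {X Y S T : Type*} [Fintype X] [Fintype Y] [Fintype S] [Fintype T]
    (W : X → Y → ℝ) (hW0 : ∀ x y, 0 ≤ W x y) (hW1 : ∀ x, ∑ y : Y, W x y = 1)
    (cX : X → S) (cY : Y → T) (Cs : ℝ) (hCs : Cs = semCapacity W cX cY)
    (δ : ℝ) (hδ : 0 < δ)
    (wmin : ℝ) (hwmin_pos : 0 < wmin) (hwmin_le : ∀ x y, 0 < W x y → wmin ≤ W x y)
    (hwmin_le1 : wmin ≤ 1) (hWle1 : ∀ x y, W x y ≤ 1)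
    (n : ℕ) (hn : 1 ≤ n) (M : ℕ) (hMlb : (2:ℝ) ^ ((n:ℝ) * (Cs + 2*δ)) ≤ (M:ℝ))
    (φ : Fin M → Fin n → X) (ψ : (Fin n → Y) → Fin M) :
    (1/(M:ℝ)) * ∑ msg : Fin M,
        ∑ y ∈ Finset.univ.filter (fun y : Fin n → Y => ψ y = msg), ∏ k, W (φ msg k) (y k)
      ≤ ((n:ℝ)+1) ^ (Fintype.card X) * ((2:ℝ) ^ (-δ)) ^ n
        + 4 * (Real.logb 2 (n:ℝ) + (-Real.logb 2 wmin)) ^ 2 / ((n:ℝ) * δ ^ 2) := by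
  classical
  have hnR : (0:ℝ) < n := by exact_mod_cast hn
  have hnne : (n:ℝ) ≠ 0 := ne_of_gt hnR
  have hMpos : (0:ℝ) < M := lt_of_lt_of_le (Real.rpow_pos_of_pos two_pos _) hMlb
  set B : ℝ := 4 * (Real.logb 2 (n:ℝ) + (-Real.logb 2 wmin)) ^ 2 / ((n:ℝ) * δ ^ 2) with hBdef
  have hB0 : 0 ≤ B := by rw [hBdef]; positivity
  set Γ : ℝ := (2:ℝ) ^ ((n:ℝ) * (Cs + δ)) with hΓdef
  have hΓpos : 0 < Γ := Real.rpow_pos_of_pos two_pos _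
  set pm : Fin M → X → ℝ :=
    fun msg a => (((Finset.univ.filter (fun k => φ msg k = a)).card : ℕ) : ℝ) / n with hpmdef
  have hper : ∀ msg : Fin M,
      ∑ y ∈ Finset.univ.filter (fun y : Fin n → Y => ψ y = msg), ∏ k, W (φ msg k) (y k)
      ≤ Γ * (∑ y ∈ Finset.univ.filter (fun y : Fin n → Y => ψ y = msg),
          ∏ k, (∑ a, pm msg a * W a (y k))) + B := by
    intro msg
    exact permsg W hW0 hW1 cX cY Cs hCs δ hδ wmin hwmin_pos hwmin_le hwmin_le1 hWle1
      n hn (φ msg) (pm msg) rfl _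
  -- facts about pm
  have hpm0 : ∀ msg a, 0 ≤ pm msg a := by
    intro msg a; simp only [hpmdef]; positivity
  have hpm1 : ∀ msg, ∑ a, pm msg a = 1 := by
    intro msg
    have hcnt_sum : ∑ a, ((Finset.univ.filter (fun k => φ msg k = a)).card : ℕ) = n := by
      have h := Finset.card_eq_sum_card_fiberwise
        (f := φ msg) (s := Finset.univ) (t := Finset.univ) (fun k _ => Finset.mem_univ _)
      rw [Finset.card_univ, Fintype.card_fin] at h
      exact h.symm
    simp only [hpmdef]
    rw [← Finset.sum_div]
    rw [show (∑ a, (((Finset.univ.filter (fun k => φ msg k = a)).card : ℕ) : ℝ))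
        = ((∑ a, ((Finset.univ.filter (fun k => φ msg k = a)).card : ℕ) : ℕ) : ℝ) by
      push_cast; rfl]
    rw [hcnt_sum, div_self hnne]
  have hqm1 : ∀ msg, ∑ b, (∑ a, pm msg a * W a b) = 1 := by
    intro msg
    rw [Finset.sum_comm]
    calc ∑ a, ∑ b, pm msg a * W a b = ∑ a, pm msg a * ∑ b, W a b := by
          refine Finset.sum_congr rfl fun a _ => ?_
          rw [Finset.mul_sum]
      _ = 1 := by
          rw [Finset.sum_congr rfl fun a _ => by rw [hW1 a, mul_one]]
          exact hpm1 msg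
  -- grouping by type
  set τ : Fin M → (X → Fin (n+1)) := fun msg a =>
    ⟨(Finset.univ.filter (fun k => φ msg k = a)).card, by
      refine Nat.lt_succ_of_le (le_trans (Finset.card_filter_le _ _) ?_)
      rw [Finset.card_univ, Fintype.card_fin]⟩ with hτdef
  have hτpm : ∀ msg msg', τ msg = τ msg' → pm msg = pm msg' := by
    intro msg msg' h
    funext a
    have := congrFun h a
    simp only [hpmdef]
    have hval : (Finset.univ.filter (fun k => φ msg k = a)).card
        = (Finset.univ.filter (fun k => φ msg' k = a)).card := by
      have := congrArg Fin.val this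
      simpa [hτdef] using this
    rw [hval]
  have hgroup : ∑ msg : Fin M,
      (∑ y ∈ Finset.univ.filter (fun y : Fin n → Y => ψ y = msg),
        ∏ k, (∑ a, pm msg a * W a (y k)))
      ≤ ((n:ℝ)+1) ^ (Fintype.card X) := by
    calc ∑ msg : Fin M, (∑ y ∈ Finset.univ.filter (fun y : Fin n → Y => ψ y = msg),
          ∏ k, (∑ a, pm msg a * W a (y k)))
        = ∑ t : X → Fin (n+1), ∑ msg ∈ Finset.univ.filter (fun msg => τ msg = t),
            (∑ y ∈ Finset.univ.filter (fun y : Fin n → Y => ψ y = msg),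
              ∏ k, (∑ a, pm msg a * W a (y k))) :=
          (Finset.sum_fiberwise Finset.univ τ _).symm
      _ ≤ ∑ t : X → Fin (n+1), (1:ℝ) := by
          refine Finset.sum_le_sum fun t _ => ?_
          rcases Finset.eq_empty_or_nonempty
            (Finset.univ.filter (fun msg => τ msg = t)) with he | ⟨msg0, hmsg0⟩
          · rw [he, Finset.sum_empty]; norm_num
          · have hsame : ∀ msg ∈ Finset.univ.filter (fun msg => τ msg = t),
                pm msg = pm msg0 := by
              intro msg hmsg
              refine hτpm msg msg0 ?_
              rw [(Finset.mem_filter.1 hmsg).2, (Finset.mem_filter.1 hmsg0).2]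
            calc ∑ msg ∈ Finset.univ.filter (fun msg => τ msg = t),
                  (∑ y ∈ Finset.univ.filter (fun y : Fin n → Y => ψ y = msg),
                    ∏ k, (∑ a, pm msg a * W a (y k)))
                = ∑ msg ∈ Finset.univ.filter (fun msg => τ msg = t),
                  (∑ y ∈ Finset.univ.filter (fun y : Fin n → Y => ψ y = msg),
                    ∏ k, (∑ a, pm msg0 a * W a (y k))) := by
                  refine Finset.sum_congr rfl fun msg hmsg => ?_
                  rw [hsame msg hmsg]
              _ ≤ ∑ msg : Fin M,
                  (∑ y ∈ Finset.univ.filter (fun y : Fin n → Y => ψ y = msg),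
                    ∏ k, (∑ a, pm msg0 a * W a (y k))) := by
                  refine Finset.sum_le_sum_of_subset_of_nonneg (Finset.subset_univ _) ?_
                  intro msg _ _
                  refine Finset.sum_nonneg fun y _ => Finset.prod_nonneg fun k _ => ?_
                  exact Finset.sum_nonneg fun a _ => mul_nonneg (hpm0 msg0 a) (hW0 a _)
              _ = ∑ y : Fin n → Y, ∏ k, (∑ a, pm msg0 a * W a (y k)) :=
                  Finset.sum_fiberwise Finset.univ ψ _
              _ = ∏ k : Fin n, ∑ b, (∑ a, pm msg0 a * W a b) :=
                  prodFact (fun k b => ∑ a, pm msg0 a * W a b)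
              _ = 1 := by
                  rw [Finset.prod_congr rfl fun k _ => hqm1 msg0]
                  exact Finset.prod_const_one
      _ = ((n:ℝ)+1) ^ (Fintype.card X) := by
          rw [Finset.sum_const, Finset.card_univ, nsmul_eq_mul, mul_one]
          rw [Fintype.card_fun]
          push_cast
          rw [Fintype.card_fin]
          push_cast
          ring
  -- put it together
  have htotal : ∑ msg : Fin M,
      ∑ y ∈ Finset.univ.filter (fun y : Fin n → Y => ψ y = msg), ∏ k, W (φ msg k) (y k)
      ≤ Γ * ((n:ℝ)+1) ^ (Fintype.card X) + (M:ℝ) * B := by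
    calc ∑ msg : Fin M,
        ∑ y ∈ Finset.univ.filter (fun y : Fin n → Y => ψ y = msg), ∏ k, W (φ msg k) (y k)
        ≤ ∑ msg : Fin M, (Γ * (∑ y ∈ Finset.univ.filter (fun y : Fin n → Y => ψ y = msg),
            ∏ k, (∑ a, pm msg a * W a (y k))) + B) :=
          Finset.sum_le_sum fun msg _ => hper msg
      _ = Γ * (∑ msg : Fin M, (∑ y ∈ Finset.univ.filter (fun y : Fin n → Y => ψ y = msg),
            ∏ k, (∑ a, pm msg a * W a (y k)))) + (M:ℝ) * B := by
          rw [Finset.sum_add_distrib, Finset.sum_const, Finset.card_univ, Fintype.card_fin,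
            nsmul_eq_mul, ← Finset.mul_sum]
      _ ≤ Γ * ((n:ℝ)+1) ^ (Fintype.card X) + (M:ℝ) * B := by
          have := mul_le_mul_of_nonneg_left hgroup hΓpos.le
          linarith
  have hΓM : Γ / (M:ℝ) ≤ ((2:ℝ) ^ (-δ)) ^ n := by
    have h1 : Γ / (M:ℝ) ≤ Γ / (2:ℝ) ^ ((n:ℝ) * (Cs + 2*δ)) :=
      div_le_div_of_nonneg_left hΓpos.le (Real.rpow_pos_of_pos two_pos _) hMlb
    have h2 : Γ / (2:ℝ) ^ ((n:ℝ) * (Cs + 2*δ)) = ((2:ℝ) ^ (-δ)) ^ n := by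
      rw [hΓdef, ← Real.rpow_sub two_pos]
      rw [show (n:ℝ) * (Cs + δ) - (n:ℝ) * (Cs + 2*δ) = (-δ) * (n:ℝ) by ring]
      rw [Real.rpow_mul (by norm_num : (0:ℝ) ≤ 2), Real.rpow_natCast]
    rw [← h2]
    exact h1
  calc (1/(M:ℝ)) * ∑ msg : Fin M,
      ∑ y ∈ Finset.univ.filter (fun y : Fin n → Y => ψ y = msg), ∏ k, W (φ msg k) (y k)
      ≤ (1/(M:ℝ)) * (Γ * ((n:ℝ)+1) ^ (Fintype.card X) + (M:ℝ) * B) := by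
        apply mul_le_mul_of_nonneg_left htotal (by positivity)
    _ = (Γ / (M:ℝ)) * ((n:ℝ)+1) ^ (Fintype.card X) + B := by
        field_simp
    _ ≤ ((2:ℝ) ^ (-δ)) ^ n * ((n:ℝ)+1) ^ (Fintype.card X) + B := by
        have hpow : (0:ℝ) ≤ ((n:ℝ)+1) ^ (Fintype.card X) := by positivity
        have := mul_le_mul_of_nonneg_right hΓM hpow
        linarith
    _ = ((n:ℝ)+1) ^ (Fintype.card X) * ((2:ℝ) ^ (-δ)) ^ n + B := by ring


lemma tendstoAux1 (δ : ℝ) (hδ : 0 < δ) (d : ℕ) :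
    Filter.Tendsto (fun n : ℕ => ((n:ℝ)+1) ^ d * ((2:ℝ) ^ (-δ)) ^ n)
      Filter.atTop (nhds 0) := by
  set r : ℝ := (2:ℝ) ^ (-δ) with hrdef
  have hr0 : 0 < r := Real.rpow_pos_of_pos two_pos _
  have hr1 : r < 1 := Real.rpow_lt_one_of_one_lt_of_neg one_lt_two (neg_neg_iff_pos.2 hδ)
  have habs : |r| < 1 := by rw [abs_of_pos hr0]; exact hr1
  have h1 : Filter.Tendsto (fun n : ℕ => (n:ℝ) ^ d * r ^ n) Filter.atTop (nhds 0) :=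
    tendsto_pow_const_mul_const_pow_of_abs_lt_one d habs
  have h2 : Filter.Tendsto (fun n : ℕ => ((n+1:ℕ):ℝ) ^ d * r ^ (n+1))
      Filter.atTop (nhds 0) :=
    h1.comp (Filter.tendsto_add_atTop_nat 1)
  have h3 := h2.mul_const (1/r)
  rw [zero_mul] at h3
  refine h3.congr fun n => ?_
  push_cast
  field_simp
  ring

lemma tendstoAux2 (δ c0 : ℝ) :
    Filter.Tendsto (fun n : ℕ => 4 * (Real.logb 2 (n:ℝ) + c0) ^ 2 / ((n:ℝ) * δ ^ 2))
      Filter.atTop (nhds 0) := by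
  have h2 : Filter.Tendsto (fun x : ℝ => Real.log x ^ 2 / x) Filter.atTop (nhds 0) := by
    have := Real.tendsto_pow_log_div_mul_add_atTop 1 0 2 one_ne_zero
    simpa using this
  have h1 : Filter.Tendsto (fun x : ℝ => Real.log x ^ 1 / x) Filter.atTop (nhds 0) := by
    have := Real.tendsto_pow_log_div_mul_add_atTop 1 0 1 one_ne_zero
    simpa using this
  have h0 : Filter.Tendsto (fun x : ℝ => Real.log x ^ 0 / x) Filter.atTop (nhds 0) := by
    have := Real.tendsto_pow_log_div_mul_add_atTop 1 0 0 one_ne_zero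
    simpa using this
  have hG : Filter.Tendsto (fun x : ℝ =>
      (4/δ^2) * ((1/Real.log 2)^2 * (Real.log x ^ 2 / x)
        + (2*c0*(1/Real.log 2)) * (Real.log x ^ 1 / x) + c0^2 * (Real.log x ^ 0 / x)))
      Filter.atTop (nhds 0) := by
    have := (((h2.const_mul ((1/Real.log 2)^2)).add
      (h1.const_mul (2*c0*(1/Real.log 2)))).add (h0.const_mul (c0^2))).const_mul (4/δ^2)
    simpa using this
  have hGnat := hG.comp (tendsto_natCast_atTop_atTop (R := ℝ))
  refine hGnat.congr fun n => ?_
  simp only [Function.comp]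
  rw [Real.logb]
  ring


/-- Semantic channel coding theorem, converse part: Let `W` be a discrete
memoryless channel from a finite set `X` to a finite set `Y`, with partitions of `X` and `Y`
encoded by surjective class-index maps `cX`, `cY`, and semantic capacity
`C_s = sup_p I^s(X̃;Ỹ)`.  If `R > C_s`, then for any sequence of codes with message sets
`Fin (m n)`, `m n ≥ 2^{nR}`, encoders `φ n : Fin (m n) → X^n` and decoders
`ψ n : Y^n → Fin (m n)`, the average error probability
`(1/(m n)) Σ_{msg} Pr(ψ_n(Y^n) ≠ msg | X^n = φ_n(msg))` tends to `1` as `n → ∞`,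
where `Pr(Y^n = y^n | X^n = x^n) = Π_k W(y_k|x_k)`. -/
theorem semantic_channel_coding_converse
    {X Y S T : Type*} [Fintype X] [Fintype Y] [Fintype S] [Fintype T]
    (W : X → Y → ℝ) (hW0 : ∀ x y, 0 ≤ W x y) (hW1 : ∀ x, ∑ y : Y, W x y = 1)
    (cX : X → S) (hcX : Function.Surjective cX)
    (cY : Y → T) (hcY : Function.Surjective cY)
    (R : ℝ) (hR : semCapacity W cX cY < R)
    (m : ℕ → ℕ) (hm : ∀ n : ℕ, 2 ^ ((n : ℝ) * R) ≤ (m n : ℝ))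
    (φ : ∀ n, Fin (m n) → Fin n → X) (ψ : ∀ n, (Fin n → Y) → Fin (m n)) :
    Filter.Tendsto
      (fun n : ℕ =>
        (1 / (m n : ℝ)) * ∑ msg : Fin (m n),
          ∑ y ∈ Finset.univ.filter (fun y : Fin n → Y => ψ n y ≠ msg),
            ∏ k : Fin n, W (φ n msg k) (y k))
      Filter.atTop (nhds 1) := by
  classical
  set Cs := semCapacity W cX cY with hCsdef
  set δ := (R - Cs) / 2 with hδdef
  have hδ : 0 < δ := by rw [hδdef]; linarith
  have hRδ : R = Cs + 2 * δ := by rw [hδdef]; ring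
  have hmpos : ∀ n : ℕ, 0 < m n := by
    intro n
    have h1 : (0:ℝ) < 2 ^ ((n:ℝ) * R) := Real.rpow_pos_of_pos two_pos _
    have h2 := lt_of_lt_of_le h1 (hm n)
    exact_mod_cast h2
  have hX : Nonempty X := ⟨φ 1 ⟨0, hmpos 1⟩ ⟨0, one_pos⟩⟩
  obtain ⟨x0⟩ := hX
  -- the minimum positive channel probability
  have hsWne : (Finset.univ.filter (fun ab : X × Y => 0 < W ab.1 ab.2)).Nonempty := by
    have : ∃ b : Y, 0 < W x0 b := by
      by_contra h
      push_neg at h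
      have hz : ∀ b : Y, W x0 b = 0 := fun b => le_antisymm (h b) (hW0 x0 b)
      have h1 := hW1 x0
      rw [Finset.sum_eq_zero (fun b _ => hz b)] at h1
      norm_num at h1
    obtain ⟨b0, hb0⟩ := this
    exact ⟨(x0, b0), Finset.mem_filter.2 ⟨Finset.mem_univ _, hb0⟩⟩
  set wmin : ℝ := (Finset.univ.filter (fun ab : X × Y => 0 < W ab.1 ab.2)).inf' hsWne
      (fun ab => W ab.1 ab.2) with hwmindef
  have hwmin_pos : 0 < wmin := by
    rw [hwmindef, Finset.lt_inf'_iff]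
    exact fun ab hab => (Finset.mem_filter.1 hab).2
  have hwmin_le : ∀ x y, 0 < W x y → wmin ≤ W x y := by
    intro x y h
    have hmem : (x, y) ∈ Finset.univ.filter (fun ab : X × Y => 0 < W ab.1 ab.2) :=
      Finset.mem_filter.2 ⟨Finset.mem_univ _, h⟩
    exact Finset.inf'_le (fun ab : X × Y => W ab.1 ab.2) hmem
  have hWle1 : ∀ x y, W x y ≤ 1 := by
    intro x y
    rw [← hW1 x]
    exact Finset.single_le_sum (fun b _ => hW0 x b) (Finset.mem_univ y)
  have hwmin_le1 : wmin ≤ 1 := by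
    obtain ⟨ab, hab⟩ := hsWne
    exact le_trans (Finset.inf'_le _ hab) (hWle1 ab.1 ab.2)
  -- total probability of a codeword's output distribution
  have htot : ∀ (n : ℕ) (msg : Fin (m n)),
      ∑ y : Fin n → Y, ∏ k, W (φ n msg k) (y k) = 1 := by
    intro n msg
    rw [prodFact (fun k b => W (φ n msg k) b)]
    rw [Finset.prod_congr rfl fun k _ => hW1 (φ n msg k)]
    exact Finset.prod_const_one
  -- the key per-n bound
  have hkey : ∀ n : ℕ, 1 ≤ n →
      (1 / (m n : ℝ)) * (∑ msg : Fin (m n),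
        ∑ y ∈ Finset.univ.filter (fun y : Fin n → Y => ψ n y = msg),
          ∏ k : Fin n, W (φ n msg k) (y k))
      ≤ ((n:ℝ)+1) ^ (Fintype.card X) * ((2:ℝ) ^ (-δ)) ^ n
        + 4 * (Real.logb 2 (n:ℝ) + (-Real.logb 2 wmin)) ^ 2 / ((n:ℝ) * δ ^ 2) := by
    intro n hn
    have hMlb : (2:ℝ) ^ ((n:ℝ) * (Cs + 2*δ)) ≤ ((m n : ℕ) : ℝ) := by
      rw [← hRδ]
      exact hm n
    exact keybound W hW0 hW1 cX cY Cs hCsdef δ hδ wmin hwmin_pos hwmin_le hwmin_le1 hWle1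
      n hn (m n) hMlb (φ n) (ψ n)
  -- correct probability is nonnegative
  have hlow : ∀ n : ℕ, 0 ≤ (1 / (m n : ℝ)) * (∑ msg : Fin (m n),
      ∑ y ∈ Finset.univ.filter (fun y : Fin n → Y => ψ n y = msg),
        ∏ k : Fin n, W (φ n msg k) (y k)) := by
    intro n
    refine mul_nonneg (by positivity) (Finset.sum_nonneg fun msg _ =>
      Finset.sum_nonneg fun y _ => Finset.prod_nonneg fun k _ => hW0 _ _)
  -- the upper bound tends to 0
  have hub0 : Filter.Tendsto
      (fun n : ℕ => ((n:ℝ)+1) ^ (Fintype.card X) * ((2:ℝ) ^ (-δ)) ^ n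
        + 4 * (Real.logb 2 (n:ℝ) + (-Real.logb 2 wmin)) ^ 2 / ((n:ℝ) * δ ^ 2))
      Filter.atTop (nhds 0) := by
    have := (tendstoAux1 δ hδ (Fintype.card X)).add (tendstoAux2 δ (-Real.logb 2 wmin))
    simpa using this
  -- correct probability tends to 0
  have hc : Filter.Tendsto (fun n : ℕ => (1 / (m n : ℝ)) * (∑ msg : Fin (m n),
      ∑ y ∈ Finset.univ.filter (fun y : Fin n → Y => ψ n y = msg),
        ∏ k : Fin n, W (φ n msg k) (y k))) Filter.atTop (nhds 0) := by
    refine tendsto_of_tendsto_of_tendsto_of_le_of_le' tendsto_const_nhds hub0 ?_ ?_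
    · exact Filter.Eventually.of_forall hlow
    · exact Filter.eventually_atTop.2 ⟨1, hkey⟩
  -- error = 1 - correct
  have herr : ∀ n : ℕ, (1 / (m n : ℝ)) * ∑ msg : Fin (m n),
      ∑ y ∈ Finset.univ.filter (fun y : Fin n → Y => ψ n y ≠ msg),
        ∏ k : Fin n, W (φ n msg k) (y k)
      = 1 - (1 / (m n : ℝ)) * (∑ msg : Fin (m n),
      ∑ y ∈ Finset.univ.filter (fun y : Fin n → Y => ψ n y = msg),
        ∏ k : Fin n, W (φ n msg k) (y k)) := by
    intro n
    have h1 : ∀ msg : Fin (m n),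
        ∑ y ∈ Finset.univ.filter (fun y : Fin n → Y => ψ n y ≠ msg),
          ∏ k : Fin n, W (φ n msg k) (y k)
        = 1 - ∑ y ∈ Finset.univ.filter (fun y : Fin n → Y => ψ n y = msg),
          ∏ k : Fin n, W (φ n msg k) (y k) := by
      intro msg
      have h2 := Finset.sum_filter_add_sum_filter_not Finset.univ
        (fun y : Fin n → Y => ψ n y = msg) (fun y => ∏ k : Fin n, W (φ n msg k) (y k))
      rw [htot n msg] at h2
      linarith
    rw [Finset.sum_congr rfl fun msg _ => h1 msg, Finset.sum_sub_distrib,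
      Finset.sum_const, Finset.card_univ, Fintype.card_fin, nsmul_eq_mul, mul_one, mul_sub]
    congr 1
    rw [one_div, inv_mul_cancel₀]
    exact_mod_cast (hmpos n).ne'
  have h10 : Filter.Tendsto (fun n : ℕ => 1 - (1 / (m n : ℝ)) * (∑ msg : Fin (m n),
      ∑ y ∈ Finset.univ.filter (fun y : Fin n → Y => ψ n y = msg),
        ∏ k : Fin n, W (φ n msg k) (y k))) Filter.atTop (nhds 1) := by
    have := (tendsto_const_nhds (x := (1:ℝ)) (f := Filter.atTop (α := ℕ))).sub hc
    simpa using this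
  exact h10.congr fun n => (herr n).symm
end
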